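/- arXiv:1001.2766 — 7 statements merged into one kernel-verified Lean document; each statement's English description precedes it below -/
import Mathlib

section
/- For any real numbers $x, z \in [0,1]$ with $z\sqrt{2-z^2} \leq x \leq z(2-z)$ and $0 < z < 1$, we have $\sqrt{\frac{x(1-x)}{z(1-z)}} + \sqrt{z(1+z)} \leq 1.85$. -/
set_option maxHeartbeats 1000000 in
lemma key_ineq (z s t : ℝ) (hl : (0.45:ℝ) ≤ z) (hr : z ≤ 1)
    (ht0 : 0 ≤ t) (ht2 : t^2 = 2 - z^2) (hs0 : 0 ≤ s) (hs2 : s^2 = z*(1+z)) :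
    t + 3.7*(1-z)*s ≤ 3.4225 - 0.4225*z - 2*z^3 := by
  have h1z : (0:ℝ) ≤ 1 - z := by linarith
  rcases le_or_gt z 0.58 with h | h
  · have hT : 2*1.318*t ≤ 2 - z^2 + 1.318^2 := by nlinarith [sq_nonneg (t - 1.318)]
    have hS : 2*0.884*s ≤ z*(1+z) + 0.884^2 := by nlinarith [sq_nonneg (s - 0.884)]
    have hS' := mul_le_mul_of_nonneg_left hS h1z
    nlinarith [hT, hS', mul_nonneg (by linarith : (0:ℝ) ≤ z - 0.45) (by linarith : (0:ℝ) ≤ 0.58 - z)]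
  rcases le_or_gt z 0.645 with h2 | h2
  · have hT : 2*1.276*t ≤ 2 - z^2 + 1.276^2 := by nlinarith [sq_nonneg (t - 1.276)]
    have hS : 2*0.992*s ≤ z*(1+z) + 0.992^2 := by nlinarith [sq_nonneg (s - 0.992)]
    have hS' := mul_le_mul_of_nonneg_left hS h1z
    nlinarith [hT, hS', mul_nonneg (by linarith : (0:ℝ) ≤ z - 0.58) (by linarith : (0:ℝ) ≤ 0.645 - z)]
  rcases le_or_gt z 0.73 with h3 | h3
  · have hT : 2*1.236*t ≤ 2 - z^2 + 1.236^2 := by nlinarith [sq_nonneg (t - 1.236)]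
    have hS : 2*1.077*s ≤ z*(1+z) + 1.077^2 := by nlinarith [sq_nonneg (s - 1.077)]
    have hS' := mul_le_mul_of_nonneg_left hS h1z
    nlinarith [hT, hS', mul_nonneg (by linarith : (0:ℝ) ≤ z - 0.645) (by linarith : (0:ℝ) ≤ 0.73 - z)]
  rcases le_or_gt z 0.83 with h4 | h4
  · have hT : 2*1.179*t ≤ 2 - z^2 + 1.179^2 := by nlinarith [sq_nonneg (t - 1.179)]
    have hS : 2*1.18*s ≤ z*(1+z) + 1.18^2 := by nlinarith [sq_nonneg (s - 1.18)]
    have hS' := mul_le_mul_of_nonneg_left hS h1z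
    nlinarith [hT, hS', mul_nonneg (by linarith : (0:ℝ) ≤ z - 0.73) (by linarith : (0:ℝ) ≤ 0.83 - z)]
  rcases le_or_gt z 0.93 with h5 | h5
  · have hT : 2*1.107*t ≤ 2 - z^2 + 1.107^2 := by nlinarith [sq_nonneg (t - 1.107)]
    have hS : 2*1.29*s ≤ z*(1+z) + 1.29^2 := by nlinarith [sq_nonneg (s - 1.29)]
    have hS' := mul_le_mul_of_nonneg_left hS h1z
    nlinarith [hT, hS', mul_nonneg (by linarith : (0:ℝ) ≤ z - 0.83) (by linarith : (0:ℝ) ≤ 0.93 - z)]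
  · have hT : 2*1*t ≤ 2 - z^2 + 1^2 := by nlinarith [sq_nonneg (t - 1)]
    have hS : 2*1.414*s ≤ z*(1+z) + 1.414^2 := by nlinarith [sq_nonneg (s - 1.414)]
    have hS' := mul_le_mul_of_nonneg_left hS h1z
    nlinarith [hT, hS', mul_nonneg (by linarith : (0:ℝ) ≤ z - 0.93) (by linarith : (0:ℝ) ≤ 1 - z),
      sq_nonneg (1 - z), mul_nonneg (mul_nonneg h1z h1z) h1z]
set_option maxHeartbeats 1000000 in
theorem one_step_contraction (x z : ℝ) (hx : x ∈ Set.Icc (0:ℝ) 1)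
    (hz : z ∈ Set.Icc (0:ℝ) 1) (hz0 : 0 < z) (hz1 : z < 1)
    (h1 : z * Real.sqrt (2 - z^2) ≤ x) (h2 : x ≤ z * (2 - z)) :
    Real.sqrt (x * (1 - x) / (z * (1 - z))) + Real.sqrt (z * (1 + z)) ≤ 1.85 := by
  obtain ⟨hx0, hx1⟩ := hx
  have hz1' : (0:ℝ) < 1 - z := by linarith
  set s := Real.sqrt (z*(1+z)) with hs_def
  have hs0 : 0 ≤ s := Real.sqrt_nonneg _
  have hs2 : s^2 = z*(1+z) := Real.sq_sqrt (by nlinarith)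
  set t := Real.sqrt (2 - z^2) with ht_def
  have ht0 : 0 ≤ t := Real.sqrt_nonneg _
  have ht2 : t^2 = 2 - z^2 := Real.sq_sqrt (by nlinarith)
  have hs185 : s ≤ 1.85 := by nlinarith
  have hzz : 0 < z*(1-z) := mul_pos hz0 hz1'
  have key : x*(1-x) ≤ (z*(1-z)) * (1.85 - s)^2 := by
    rcases le_or_gt z 0.29 with hc | hc
    · have hb2 : (0:ℝ) ≤ 1 - x - z*(2-z) := by nlinarith
      have hxb : x*(1-x) ≤ z*(2-z)*(1 - z*(2-z)) := by
        nlinarith [mul_nonneg (by linarith : (0:ℝ) ≤ z*(2-z) - x) hb2]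
      have hsb : 3.7*s ≤ 1.4225 + 4*z := by nlinarith [sq_nonneg (z - 0.5)]
      nlinarith [hxb, mul_le_mul_of_nonneg_left hsb (le_of_lt hzz)]
    rcases le_or_gt z 0.45 with hc2 | hc2
    · have hx4 : x*(1-x) ≤ 1/4 := by nlinarith [sq_nonneg (x - 1/2)]
      rcases le_or_gt z 0.37 with hc3 | hc3
      · have hS : 2*0.66*s ≤ z*(1+z) + 0.66^2 := by nlinarith [sq_nonneg (s - 0.66)]
        nlinarith [mul_le_mul_of_nonneg_left hS (le_of_lt hzz),
          mul_nonneg (by linarith : (0:ℝ) ≤ z - 0.29) (by linarith : (0:ℝ) ≤ 0.37 - z)]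
      · have hS : 2*0.76*s ≤ z*(1+z) + 0.76^2 := by nlinarith [sq_nonneg (s - 0.76)]
        nlinarith [mul_le_mul_of_nonneg_left hS (le_of_lt hzz),
          mul_nonneg (by linarith : (0:ℝ) ≤ z - 0.37) (by linarith : (0:ℝ) ≤ 0.45 - z)]
    · have hzt2 : (z*t)^2 = z^2*(2-z^2) := by rw [mul_pow, ht2]
      have hzt0 : 0 ≤ z*t := mul_nonneg hz0.le ht0
      have ha : 1/2 ≤ z*t := by nlinarith [sq_nonneg (1 - z^2)]
      have hmono : x*(1-x) ≤ z*t*(1 - z*t) := by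
        nlinarith [mul_nonneg (by linarith : (0:ℝ) ≤ x - z*t) (by linarith : (0:ℝ) ≤ x + z*t - 1)]
      have hk := key_ineq z s t (by linarith) (by linarith) ht0 ht2 hs0 hs2
      nlinarith [hmono, mul_le_mul_of_nonneg_left hk hz0.le]
  have hdiv : x*(1-x)/(z*(1-z)) ≤ (1.85 - s)^2 := by
    rw [div_le_iff₀ hzz]
    nlinarith [key]
  have hsq := Real.sqrt_le_sqrt hdiv
  rw [Real.sqrt_sq (by linarith)] at hsq
  linarith
end

section
/- Let $(B_n)_{n \geq 1}$ be i.i.d. Bernoulli(1/2) random variables and let $(Z_n)$ be any adapted process with values in $[0,1]$ satisfying $Z_{n+1} = Z_n^2$ if $B_{n+1}=1$ and $Z_n\sqrt{2-Z_n^2} \leq Z_{n+1} \leq 2Z_n - Z_n^2$ if $B_{n+1}=0$, with $Z_0 = z_0 \in [0,1]$. Define $Q_n = Z_n(1-Z_n)$. Then $\mathbb{E}[Q_n^{1/2}] \leq \frac{1}{2}\left(\frac{1.85}{2}\right)^n$. -/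
open MeasureTheory ProbabilityTheory

set_option maxHeartbeats 2000000

lemma sqQ_sqrt_le_quad {x c : ℝ} (hc : 0 < c) (hx : 0 ≤ x) :
    2*c*Real.sqrt x ≤ x + c^2 := by
  nlinarith [sq_nonneg (Real.sqrt x - c), Real.sq_sqrt hx]

lemma sqQ_G (z : ℝ) (hz0 : 0 ≤ z) (hz1 : z ≤ 1) :
    Real.sqrt (2 - z^2) + 3.7*(1-z)*Real.sqrt (z + z^2) ≤ 3.4225 - 0.4225*z - 2*z^3 := by
  have h2 : (0:ℝ) ≤ 2 - z^2 := by nlinarith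
  have hzz : (0:ℝ) ≤ z + z^2 := by nlinarith
  have hu : ∀ c : ℝ, 0 < c → 2*c*Real.sqrt (2 - z^2) ≤ (2 - z^2) + c^2 :=
    fun c hc => sqQ_sqrt_le_quad hc h2
  have ht : ∀ d : ℝ, 0 < d → 2*d*Real.sqrt (z + z^2) ≤ (z + z^2) + d^2 :=
    fun d hd => sqQ_sqrt_le_quad hd hzz
  have h1z : (0:ℝ) ≤ 1 - z := by linarith
  rcases le_or_gt z (1/4) with hq | hq
  · have hb1 := hu (1409/1000) (by norm_num)
    have hb2 : (1-z)*(2*(3/8:ℝ)*Real.sqrt (z + z^2)) ≤ (1-z)*((z + z^2) + (3/8:ℝ)^2) := mul_le_mul_of_nonneg_left (ht (3/8) (by norm_num)) h1z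
    have hiv : (0:ℝ) ≤ (z)*((1/4) - z) := mul_nonneg (by linarith) (by linarith)
    nlinarith [hb1, hb2, hiv, mul_nonneg hiv hz0, mul_nonneg hiv h1z, sq_nonneg (z - 3/25)]
  rcases le_or_gt z (2/5) with hq | hq
  · have hb1 := hu (172/125) (by norm_num)
    have hb2 : (1-z)*(2*(82/125:ℝ)*Real.sqrt (z + z^2)) ≤ (1-z)*((z + z^2) + (82/125:ℝ)^2) := mul_le_mul_of_nonneg_left (ht (82/125) (by norm_num)) h1z
    have hiv : (0:ℝ) ≤ (z - (1/4))*((2/5) - z) := mul_nonneg (by linarith) (by linarith)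
    nlinarith [hb1, hb2, hiv, mul_nonneg hiv hz0, mul_nonneg hiv h1z, sq_nonneg (z - 8/25)]
  rcases le_or_gt z (1/2) with hq | hq
  · have hb1 := hu (1341/1000) (by norm_num)
    have hb2 : (1-z)*(2*(101/125:ℝ)*Real.sqrt (z + z^2)) ≤ (1-z)*((z + z^2) + (101/125:ℝ)^2) := mul_le_mul_of_nonneg_left (ht (101/125) (by norm_num)) h1z
    have hiv : (0:ℝ) ≤ (z - (2/5))*((1/2) - z) := mul_nonneg (by linarith) (by linarith)
    nlinarith [hb1, hb2, hiv, mul_nonneg hiv hz0, mul_nonneg hiv h1z, sq_nonneg (z - 9/20)]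
  rcases le_or_gt z (14/25) with hq | hq
  · have hb1 := hu (1311/1000) (by norm_num)
    have hb2 : (1-z)*(2*(9/10:ℝ)*Real.sqrt (z + z^2)) ≤ (1-z)*((z + z^2) + (9/10:ℝ)^2) := mul_le_mul_of_nonneg_left (ht (9/10) (by norm_num)) h1z
    have hiv : (0:ℝ) ≤ (z - (1/2))*((14/25) - z) := mul_nonneg (by linarith) (by linarith)
    nlinarith [hb1, hb2, hiv, mul_nonneg hiv hz0, mul_nonneg hiv h1z, sq_nonneg (z - 53/100)]
  rcases le_or_gt z (61/100) with hq | hq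
  · have hb1 := hu (161/125) (by norm_num)
    have hb2 : (1-z)*(2*(963/1000:ℝ)*Real.sqrt (z + z^2)) ≤ (1-z)*((z + z^2) + (963/1000:ℝ)^2) := mul_le_mul_of_nonneg_left (ht (963/1000) (by norm_num)) h1z
    have hiv : (0:ℝ) ≤ (z - (14/25))*((61/100) - z) := mul_nonneg (by linarith) (by linarith)
    nlinarith [hb1, hb2, hiv, mul_nonneg hiv hz0, mul_nonneg hiv h1z, sq_nonneg (z - 29/50)]
  rcases le_or_gt z (13/20) with hq | hq
  · have hb1 := hu (633/500) (by norm_num)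
    have hb2 : (1-z)*(2*(1013/1000:ℝ)*Real.sqrt (z + z^2)) ≤ (1-z)*((z + z^2) + (1013/1000:ℝ)^2) := mul_le_mul_of_nonneg_left (ht (1013/1000) (by norm_num)) h1z
    have hiv : (0:ℝ) ≤ (z - (61/100))*((13/20) - z) := mul_nonneg (by linarith) (by linarith)
    nlinarith [hb1, hb2, hiv, mul_nonneg hiv hz0, mul_nonneg hiv h1z, sq_nonneg (z - 63/100)]
  rcases le_or_gt z (17/25) with hq | hq
  · have hb1 := hu (156/125) (by norm_num)
    have hb2 : (1-z)*(2*(263/250:ℝ)*Real.sqrt (z + z^2)) ≤ (1-z)*((z + z^2) + (263/250:ℝ)^2) := mul_le_mul_of_nonneg_left (ht (263/250) (by norm_num)) h1z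
    have hiv : (0:ℝ) ≤ (z - (13/20))*((17/25) - z) := mul_nonneg (by linarith) (by linarith)
    nlinarith [hb1, hb2, hiv, mul_nonneg hiv hz0, mul_nonneg hiv h1z, sq_nonneg (z - 33/50)]
  rcases le_or_gt z (71/100) with hq | hq
  · have hb1 := hu (154/125) (by norm_num)
    have hb2 : (1-z)*(2*(217/200:ℝ)*Real.sqrt (z + z^2)) ≤ (1-z)*((z + z^2) + (217/200:ℝ)^2) := mul_le_mul_of_nonneg_left (ht (217/200) (by norm_num)) h1z
    have hiv : (0:ℝ) ≤ (z - (17/25))*((71/100) - z) := mul_nonneg (by linarith) (by linarith)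
    nlinarith [hb1, hb2, hiv, mul_nonneg hiv hz0, mul_nonneg hiv h1z, sq_nonneg (z - 7/10)]
  rcases le_or_gt z (37/50) with hq | hq
  · have hb1 := hu (607/500) (by norm_num)
    have hb2 : (1-z)*(2*(559/500:ℝ)*Real.sqrt (z + z^2)) ≤ (1-z)*((z + z^2) + (559/500:ℝ)^2) := mul_le_mul_of_nonneg_left (ht (559/500) (by norm_num)) h1z
    have hiv : (0:ℝ) ≤ (z - (71/100))*((37/50) - z) := mul_nonneg (by linarith) (by linarith)
    nlinarith [hb1, hb2, hiv, mul_nonneg hiv hz0, mul_nonneg hiv h1z, sq_nonneg (z - 18/25)]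
  rcases le_or_gt z (39/50) with hq | hq
  · have hb1 := hu (1193/1000) (by norm_num)
    have hb2 : (1-z)*(2*(1157/1000:ℝ)*Real.sqrt (z + z^2)) ≤ (1-z)*((z + z^2) + (1157/1000:ℝ)^2) := mul_le_mul_of_nonneg_left (ht (1157/1000) (by norm_num)) h1z
    have hiv : (0:ℝ) ≤ (z - (37/50))*((39/50) - z) := mul_nonneg (by linarith) (by linarith)
    nlinarith [hb1, hb2, hiv, mul_nonneg hiv hz0, mul_nonneg hiv h1z, sq_nonneg (z - 19/25)]
  rcases le_or_gt z (21/25) with hq | hq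
  · have hb1 := hu (1159/1000) (by norm_num)
    have hb2 : (1-z)*(2*(1211/1000:ℝ)*Real.sqrt (z + z^2)) ≤ (1-z)*((z + z^2) + (1211/1000:ℝ)^2) := mul_le_mul_of_nonneg_left (ht (1211/1000) (by norm_num)) h1z
    have hiv : (0:ℝ) ≤ (z - (39/50))*((21/25) - z) := mul_nonneg (by linarith) (by linarith)
    nlinarith [hb1, hb2, hiv, mul_nonneg hiv hz0, mul_nonneg hiv h1z, sq_nonneg (z - 81/100)]
  rcases le_or_gt z (9/10) with hq | hq
  · have hb1 := hu (223/200) (by norm_num)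
    have hb2 : (1-z)*(2*(51/40:ℝ)*Real.sqrt (z + z^2)) ≤ (1-z)*((z + z^2) + (51/40:ℝ)^2) := mul_le_mul_of_nonneg_left (ht (51/40) (by norm_num)) h1z
    have hiv : (0:ℝ) ≤ (z - (21/25))*((9/10) - z) := mul_nonneg (by linarith) (by linarith)
    nlinarith [hb1, hb2, hiv, mul_nonneg hiv hz0, mul_nonneg hiv h1z, sq_nonneg (z - 87/100)]
  have hb1 := hu (1) (by norm_num)
  have hb2 : (1-z)*(2*(707/500:ℝ)*Real.sqrt (z + z^2)) ≤ (1-z)*((z + z^2) + (707/500:ℝ)^2) := mul_le_mul_of_nonneg_left (ht (707/500) (by norm_num)) h1z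
  have hiv : (0:ℝ) ≤ (z - (9/10))*((1) - z) := mul_nonneg (by linarith) (by linarith)
  nlinarith [hb1, hb2, hiv, mul_nonneg hiv hz0, mul_nonneg hiv h1z, sq_nonneg (z - 19/20)]

lemma sqQ_le_of_sq {a b : ℝ} (ha : 0 ≤ a) (hb : 0 ≤ b) (h : a^2 ≤ b^2) : a ≤ b := by
  nlinarith

lemma sqQ_sqrt_bound {x y : ℝ} (h : x ≤ y^2) (hy : 0 ≤ y) : Real.sqrt x ≤ y := by
  calc Real.sqrt x ≤ Real.sqrt (y^2) := Real.sqrt_le_sqrt h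
    _ = y := Real.sqrt_sq hy

lemma sqQ_aux1 {w a : ℝ} (h1 : a ≤ w) (h2 : 1/2 ≤ a) (h3 : w ≤ 1) :
    w*(1-w) ≤ a*(1-a) := by nlinarith [mul_nonneg (by linarith : (0:ℝ) ≤ w - a) (by linarith : (0:ℝ) ≤ w + a - 1)]

lemma sqQ_aux2 {w b : ℝ} (h1 : w ≤ b) (h2 : b ≤ 1/2) (h0 : 0 ≤ w) :
    w*(1-w) ≤ b*(1-b) := by nlinarith [mul_nonneg (by linarith : (0:ℝ) ≤ b - w) (by linarith : (0:ℝ) ≤ 1 - w - b)]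

lemma sqQ_aux3 {w : ℝ} : w*(1-w) ≤ 1/4 := by nlinarith [sq_nonneg (w - 1/2)]

lemma sqQ_key1 {z u t : ℝ} (hzu2 : (z*u)^2 = z^2*(2-z^2))
    (hGz : z*(u + 3.7*(1-z)*t) ≤ z*(3.4225 - 0.4225*z - 2*z^3)) :
    z*u*(1-z*u) ≤ 3.4225*(z*(1-z)) - 3.7*(z*(1-z))*t + z^2*(1-z^2) := by
  linarith [hzu2, hGz]

lemma sqQ_key2 {z t : ℝ} (hz0 : 0 ≤ z) (hz1 : z ≤ 1) (ht0 : 0 ≤ t) (ht2 : t^2 = z+z^2) :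
    (2*z-z^2)*(1-(2*z-z^2)) ≤ 3.4225*(z*(1-z)) - 3.7*(z*(1-z))*t + z^2*(1-z^2) := by
  have hquad : (0:ℝ) ≤ 2.0235 - 2.31*z + 2.31*z^2 := by nlinarith [sq_nonneg (z - 1/2)]
  have h37 : 3.7*(z*(1-z))*t ≤ z*(1-z)*(1.4225+4*z) := by
    have hzz : (0:ℝ) ≤ z*(1-z) := mul_nonneg hz0 (by linarith)
    apply sqQ_le_of_sq (by nlinarith [mul_nonneg hzz ht0]) (by nlinarith)
    have hsq : (3.7*(z*(1-z))*t)^2 = 13.69*(z*(1-z))^2*(z+z^2) := by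
      rw [mul_pow, mul_pow, ht2]; ring
    rw [hsq]
    nlinarith [mul_nonneg (sq_nonneg (z*(1-z))) hquad]
  nlinarith [h37]

lemma sqQ_key3 {z : ℝ} (hz0 : 0 ≤ z) (hz1 : z ≤ 1) (hb : 1/2 < 2*z - z^2)
    (hzu : z^2*(2-z^2) < 1/4) : (z + 1/2)^2 ≤ 3.4225*(z*(1-z)) := by
  have b1 : 1/4 ≤ z := by nlinarith [sq_nonneg z]
  have b2 : z ≤ 19/50 := by
    by_contra hcon
    push_neg at hcon
    have hf1 : (0:ℝ) ≤ z^2 - (19/50)^2 := by nlinarith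
    have hf2 : (0:ℝ) ≤ 2 - z^2 - (19/50)^2 := by nlinarith
    nlinarith [mul_nonneg hf1 hf2]
  nlinarith [mul_nonneg (by linarith : (0:ℝ) ≤ z - 1/4) (by linarith : (0:ℝ) ≤ 19/50 - z)]

lemma sqQ_sq_lt {x : ℝ} (h0 : 0 ≤ x) (h : x < 1/2) : x^2 < 1/4 := by nlinarith

lemma sqQ_le_one {z w : ℝ} (hz1 : z ≤ 1) (hw2 : w ≤ 2*z - z^2) : w ≤ 1 := by
  nlinarith [sq_nonneg (1-z)]

lemma sqQ_t185 {z t : ℝ} (hz0 : 0 ≤ z) (hz1 : z ≤ 1) (ht0 : 0 ≤ t) (ht2 : t^2 = z+z^2) :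
    t ≤ 1.85 := sqQ_le_of_sq ht0 (by norm_num) (by nlinarith)

lemma sqQ_zs {r t z s : ℝ} (hrt : r*t = z*s) (ht185 : t ≤ 1.85) (hr0 : 0 ≤ r) :
    z*s ≤ 1.85*r := by nlinarith [mul_le_mul_of_nonneg_left ht185 hr0]

lemma sqQ_sle {s : ℝ} (hs0 : 0 ≤ s) (h : s^2 ≤ 1) : s ≤ 1 := by nlinarith

lemma sqQ_minus {z w : ℝ} (hz0 : 0 ≤ z) (hz1 : z ≤ 1)
    (hw1 : z * Real.sqrt (2 - z^2) ≤ w) (hw2 : w ≤ 2*z - z^2) :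
    Real.sqrt (w*(1-w)) ≤ 1.85 * Real.sqrt (z*(1-z)) - z * Real.sqrt (1-z^2) := by
  have hzz1 : (0:ℝ) ≤ z*(1-z) := mul_nonneg hz0 (by linarith)
  have hs1 : (0:ℝ) ≤ 1-z^2 := by nlinarith
  have h2z : (0:ℝ) ≤ 2-z^2 := by nlinarith
  have htt : (0:ℝ) ≤ z+z^2 := by nlinarith
  set r := Real.sqrt (z*(1-z)) with hrdef
  set s := Real.sqrt (1-z^2) with hsdef
  set t := Real.sqrt (z+z^2) with htdef
  set u := Real.sqrt (2-z^2) with hudef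
  have hr0 : 0 ≤ r := Real.sqrt_nonneg _
  have hs0 : 0 ≤ s := Real.sqrt_nonneg _
  have ht0 : 0 ≤ t := Real.sqrt_nonneg _
  have hu0 : 0 ≤ u := Real.sqrt_nonneg _
  have hr2 : r^2 = z*(1-z) := Real.sq_sqrt hzz1
  have hs2 : s^2 = 1-z^2 := Real.sq_sqrt hs1
  have ht2 : t^2 = z+z^2 := Real.sq_sqrt htt
  have hu2 : u^2 = 2-z^2 := Real.sq_sqrt h2z
  have hrs : r * s = (1-z) * t := by
    rw [hrdef, htdef, hsdef, ← Real.sqrt_mul hzz1]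
    rw [show z*(1-z)*(1-z^2) = (1-z)^2*(z+z^2) by ring, Real.sqrt_mul (sq_nonneg (1-z)),
      Real.sqrt_sq (by linarith : (0:ℝ) ≤ 1-z)]
  have ht185 : t ≤ 1.85 := sqQ_t185 hz0 hz1 ht0 ht2
  have hrt : r * t = z * s := by
    rw [hrdef, htdef, hsdef, ← Real.sqrt_mul hzz1]
    rw [show z*(1-z)*(z+z^2) = z^2*(1-z^2) by ring, Real.sqrt_mul (sq_nonneg z),
      Real.sqrt_sq hz0]
  have hm0 : z * s ≤ 1.85 * r := sqQ_zs hrt ht185 hr0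
  have expand : (1.85*r - z*s)^2 = 3.4225*(z*(1-z)) - 3.7*(z*(1-z))*t + z^2*(1-z^2) := by
    have h1 : (1.85*r - z*s)^2 = 3.4225*r^2 - 3.7*z*(r*s) + z^2*s^2 := by ring
    rw [h1, hr2, hs2, hrs]; ring
  have hw0 : 0 ≤ w := le_trans (mul_nonneg hz0 hu0) hw1
  have hwle1 : w ≤ 1 := sqQ_le_one hz1 hw2
  rcases le_or_gt (1/2) (z*u) with hc | hc
  · -- case a ≥ 1/2
    have hwa : w*(1-w) ≤ z*u*(1-z*u) := sqQ_aux1 hw1 hc hwle1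
    have hG := sqQ_G z hz0 hz1
    rw [← hudef, ← htdef] at hG
    have hGz := mul_le_mul_of_nonneg_left hG hz0
    have hzu2 : (z*u)^2 = z^2*(2-z^2) := by rw [mul_pow, hu2]
    have key := sqQ_key1 hzu2 hGz
    rw [← expand] at key
    exact le_trans (Real.sqrt_le_sqrt hwa) (sqQ_sqrt_bound key (by linarith))
  rcases le_or_gt (2*z - z^2) (1/2) with hb | hb
  · -- case b ≤ 1/2
    have hwb : w*(1-w) ≤ (2*z-z^2)*(1-(2*z-z^2)) := sqQ_aux2 hw2 hb hw0
    have key := sqQ_key2 hz0 hz1 ht0 ht2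
    rw [← expand] at key
    exact le_trans (Real.sqrt_le_sqrt hwb) (sqQ_sqrt_bound key (by linarith))
  · -- case a < 1/2 < b
    have hzu2' : z^2*(2-z^2) < 1/4 := by
      have h14 : (z*u)^2 < 1/4 := sqQ_sq_lt (mul_nonneg hz0 hu0) hc
      rwa [mul_pow, hu2] at h14
    have key3 := sqQ_key3 hz0 hz1 hb hzu2'
    have hz185 : z + 1/2 ≤ 1.85*r := by
      apply sqQ_le_of_sq (by linarith) (by positivity)
      have : (1.85*r)^2 = 3.4225*r^2 := by ring
      rw [this, hr2]; linarith [key3]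
    have hsle1 : s ≤ 1 := sqQ_sle hs0 (by rw [hs2]; nlinarith [sq_nonneg z])
    have hzs : z*s ≤ z := by
      calc z*s ≤ z*1 := mul_le_mul_of_nonneg_left hsle1 hz0
        _ = z := mul_one z
    have h12 : Real.sqrt (w*(1-w)) ≤ 1/2 :=
      sqQ_sqrt_bound (le_trans sqQ_aux3 (by norm_num)) (by norm_num)
    linarith

theorem sqrt_Q_decay {Ω : Type*} [MeasurableSpace Ω] (μ : Measure Ω)
    [IsProbabilityMeasure μ]
    (B : ℕ → Ω → Bool) (hBmeas : ∀ n, Measurable (B n))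
    (hBindep : iIndepFun B μ)
    (hBhalf : ∀ n, μ {ω | B n ω = true} = 1/2)
    (Z : ℕ → Ω → ℝ) (hZmeas : ∀ n, Measurable (Z n))
    (hZadapted : ∀ n, @Measurable Ω ℝ
      (MeasurableSpace.comap (fun ω (i : Fin n) => B (i+1) ω) inferInstance) _ (Z n))
    (z0 : ℝ) (hz0 : z0 ∈ Set.Icc (0:ℝ) 1) (hZ0 : ∀ ω, Z 0 ω = z0)
    (hrange : ∀ n ω, Z n ω ∈ Set.Icc (0:ℝ) 1)
    (hrec : ∀ n, ∀ᵐ ω ∂μ,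
      (B (n+1) ω = true → Z (n+1) ω = (Z n ω)^2) ∧
      (B (n+1) ω = false →
        Z n ω * Real.sqrt (2 - (Z n ω)^2) ≤ Z (n+1) ω ∧
        Z (n+1) ω ≤ 2 * Z n ω - (Z n ω)^2)) :
    ∀ n, ∫ ω, Real.sqrt (Z n ω * (1 - Z n ω)) ∂μ ≤ (1/2) * (1.85/2)^n := by
  classical
  -- general facts
  have hsqrtQmeas : ∀ k, Measurable (fun ω => Real.sqrt (Z k ω * (1 - Z k ω))) :=
    fun k => ((hZmeas k).mul (measurable_const.sub (hZmeas k))).sqrt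
  have hsqrtQbd : ∀ k ω, |Real.sqrt (Z k ω * (1 - Z k ω))| ≤ 2 := by
    intro k ω
    rw [abs_of_nonneg (Real.sqrt_nonneg _)]
    exact sqQ_sqrt_bound (le_trans sqQ_aux3 (by norm_num)) (by norm_num)
  have hQint : ∀ k, Integrable (fun ω => Real.sqrt (Z k ω * (1 - Z k ω))) μ :=
    fun k => (integrable_const (2:ℝ)).mono' (hsqrtQmeas k).aestronglyMeasurable
      (Filter.Eventually.of_forall (hsqrtQbd k))
  intro n
  induction n with
  | zero =>
    simp only [pow_zero, mul_one]
    have hcong : (fun ω => Real.sqrt (Z 0 ω * (1 - Z 0 ω)))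
        = fun _ => Real.sqrt (z0 * (1 - z0)) := by
      funext ω; rw [hZ0]
    rw [hcong, integral_const, probReal_univ]
    simp only [ENNReal.toReal_one, one_smul, smul_eq_mul, one_mul]
    have hb14 : z0 * (1 - z0) ≤ (1/2:ℝ)^2 := le_trans sqQ_aux3 (by norm_num)
    exact sqQ_sqrt_bound hb14 (by norm_num)
  | succ n ih =>
    set g : ℝ → ℝ := fun z => z * Real.sqrt (1 - z^2) with hgdef
    set m : ℝ → ℝ := fun z => 1.85 * Real.sqrt (z*(1-z)) - z * Real.sqrt (1 - z^2) with hmdef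
    set χb : Bool → ℝ := fun b => cond b 1 0 with hχbdef
    set χb' : Bool → ℝ := fun b => cond b 0 1 with hχb'def
    have hgm : Measurable g :=
      measurable_id.mul ((measurable_const.sub (measurable_id.pow_const 2)).sqrt)
    have hmm : Measurable m :=
      (measurable_const.mul ((measurable_id.mul (measurable_const.sub measurable_id)).sqrt)).sub hgm
    have hχbm : Measurable χb := measurable_from_top
    have hχb'm : Measurable χb' := measurable_from_top
    -- independence of Z n and B (n+1)
    have hBZ : IndepFun (Z n) (B (n+1)) μ := by
      set S : Finset ℕ := (Finset.range n).image (· + 1) with hSdef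
      set T : Finset ℕ := {n+1} with hTdef
      have hST : Disjoint S T := by
        rw [Finset.disjoint_right]
        intro a haT haS
        rw [hTdef, Finset.mem_singleton] at haT
        rw [hSdef, Finset.mem_image] at haS
        obtain ⟨i, hi, hia⟩ := haS
        rw [Finset.mem_range] at hi
        omega
      have hFin := hBindep.indepFun_finset S T hST hBmeas
      rw [IndepFun_iff_Indep] at hFin ⊢
      have hmemT : n+1 ∈ T := by rw [hTdef]; exact Finset.mem_singleton_self _
      have hright : MeasurableSpace.comap (B (n+1)) inferInstance ≤
          MeasurableSpace.comap (fun a (i : T) => B i a) inferInstance := by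
        have hcomp : B (n+1) = (fun v : T → Bool => v ⟨n+1, hmemT⟩) ∘
            (fun a (i : T) => B i a) := rfl
        rw [hcomp, ← MeasurableSpace.comap_comp]
        exact MeasurableSpace.comap_mono (measurable_iff_comap_le.mp (measurable_pi_apply _))
      have hleft : MeasurableSpace.comap (Z n) inferInstance ≤
          MeasurableSpace.comap (fun a (i : S) => B i a) inferInstance := by
        have hmemS : ∀ i : Fin n, (i : ℕ) + 1 ∈ S := by
          intro i
          rw [hSdef, Finset.mem_image]
          exact ⟨i, Finset.mem_range.mpr i.isLt, rfl⟩
        have hcomp : (fun ω (i : Fin n) => B (i+1) ω)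
            = (fun (v : S → Bool) (i : Fin n) => v ⟨(i : ℕ) + 1, hmemS i⟩) ∘
              (fun a (i : S) => B i a) := rfl
        have hπ : Measurable (fun (v : S → Bool) (i : Fin n) => v ⟨(i : ℕ) + 1, hmemS i⟩) :=
          measurable_pi_lambda _ (fun i => measurable_pi_apply _)
        calc MeasurableSpace.comap (Z n) inferInstance
            ≤ MeasurableSpace.comap (fun ω (i : Fin n) => B (i+1) ω) inferInstance :=
              measurable_iff_comap_le.mp (hZadapted n)
          _ ≤ MeasurableSpace.comap (fun a (i : S) => B i a) inferInstance := by
              rw [hcomp, ← MeasurableSpace.comap_comp]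
              exact MeasurableSpace.comap_mono (measurable_iff_comap_le.mp hπ)
      exact indep_of_indep_of_le_left (indep_of_indep_of_le_right hFin hright) hleft
    -- bounds
    have hzmem := fun ω => hrange n ω
    have hgbd : ∀ ω, |g (Z n ω)| ≤ 2 := by
      intro ω
      obtain ⟨h0, h1⟩ := hzmem ω
      show |Z n ω * Real.sqrt (1 - (Z n ω)^2)| ≤ 2
      have hs : Real.sqrt (1 - (Z n ω)^2) ≤ 2 := sqQ_sqrt_bound (by nlinarith) (by norm_num)
      rw [abs_of_nonneg (mul_nonneg h0 (Real.sqrt_nonneg _))]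
      calc Z n ω * Real.sqrt (1 - (Z n ω)^2) ≤ 1 * 2 :=
        mul_le_mul h1 hs (Real.sqrt_nonneg _) (by norm_num)
      _ = 2 := by norm_num
    have hmbd : ∀ ω, |m (Z n ω)| ≤ 2 := by
      intro ω
      obtain ⟨h0, h1⟩ := hzmem ω
      have hr : Real.sqrt (Z n ω * (1 - Z n ω)) ≤ 1/2 := by
        have hb14 : Z n ω * (1 - Z n ω) ≤ (1/2:ℝ)^2 := le_trans sqQ_aux3 (by norm_num)
        exact sqQ_sqrt_bound hb14 (by norm_num)
      have hr0 : 0 ≤ Real.sqrt (Z n ω * (1 - Z n ω)) := Real.sqrt_nonneg _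
      have hs : Real.sqrt (1 - (Z n ω)^2) ≤ 2 := sqQ_sqrt_bound (by nlinarith) (by norm_num)
      have hzs0 : 0 ≤ Z n ω * Real.sqrt (1 - (Z n ω)^2) := mul_nonneg h0 (Real.sqrt_nonneg _)
      have hzs2 : Z n ω * Real.sqrt (1 - (Z n ω)^2) ≤ 2 := by
        calc Z n ω * Real.sqrt (1 - (Z n ω)^2) ≤ 1 * 2 :=
          mul_le_mul h1 hs (Real.sqrt_nonneg _) (by norm_num)
        _ = 2 := by norm_num
      show |1.85 * Real.sqrt (Z n ω * (1 - Z n ω)) - Z n ω * Real.sqrt (1 - (Z n ω)^2)| ≤ 2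
      rw [abs_le]
      constructor <;> [linarith; linarith]
    have hχbd : ∀ ω, |χb (B (n+1) ω)| ≤ 1 := by
      intro ω; show |cond (B (n+1) ω) (1:ℝ) 0| ≤ 1; rcases B (n+1) ω <;> simp
    have hχbd' : ∀ ω, |χb' (B (n+1) ω)| ≤ 1 := by
      intro ω; show |cond (B (n+1) ω) (0:ℝ) 1| ≤ 1; rcases B (n+1) ω <;> simp
    -- integrability
    have hintg : Integrable (fun ω => g (Z n ω)) μ :=
      (integrable_const (2:ℝ)).mono' (hgm.comp (hZmeas n)).aestronglyMeasurable
        (Filter.Eventually.of_forall hgbd)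
    have hintm : Integrable (fun ω => m (Z n ω)) μ :=
      (integrable_const (2:ℝ)).mono' (hmm.comp (hZmeas n)).aestronglyMeasurable
        (Filter.Eventually.of_forall hmbd)
    have hintχ : Integrable (fun ω => χb (B (n+1) ω)) μ :=
      (integrable_const (1:ℝ)).mono' (hχbm.comp (hBmeas (n+1))).aestronglyMeasurable
        (Filter.Eventually.of_forall hχbd)
    have hintχ' : Integrable (fun ω => χb' (B (n+1) ω)) μ :=
      (integrable_const (1:ℝ)).mono' (hχb'm.comp (hBmeas (n+1))).aestronglyMeasurable
        (Filter.Eventually.of_forall hχbd')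
    have hintgχ : Integrable (fun ω => g (Z n ω) * χb (B (n+1) ω)) μ :=
      (integrable_const (2:ℝ)).mono'
        ((hgm.comp (hZmeas n)).mul (hχbm.comp (hBmeas (n+1)))).aestronglyMeasurable
        (Filter.Eventually.of_forall (fun ω => by
          rw [Real.norm_eq_abs, abs_mul]
          calc |g (Z n ω)| * |χb (B (n+1) ω)| ≤ 2 * 1 :=
            mul_le_mul (hgbd ω) (hχbd ω) (abs_nonneg _) (by norm_num)
          _ = 2 := by norm_num))
    have hintmχ : Integrable (fun ω => m (Z n ω) * χb' (B (n+1) ω)) μ :=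
      (integrable_const (2:ℝ)).mono'
        ((hmm.comp (hZmeas n)).mul (hχb'm.comp (hBmeas (n+1)))).aestronglyMeasurable
        (Filter.Eventually.of_forall (fun ω => by
          rw [Real.norm_eq_abs, abs_mul]
          calc |m (Z n ω)| * |χb' (B (n+1) ω)| ≤ 2 * 1 :=
            mul_le_mul (hmbd ω) (hχbd' ω) (abs_nonneg _) (by norm_num)
          _ = 2 := by norm_num))
    -- a.e. domination
    have hae : ∀ᵐ ω ∂μ, Real.sqrt (Z (n+1) ω * (1 - Z (n+1) ω)) ≤
        g (Z n ω) * χb (B (n+1) ω) + m (Z n ω) * χb' (B (n+1) ω) := by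
      filter_upwards [hrec n] with ω hω
      obtain ⟨h0, h1⟩ := hrange n ω
      cases hB : B (n+1) ω with
      | true =>
        rw [hω.1 hB]
        show Real.sqrt ((Z n ω)^2 * (1 - (Z n ω)^2)) ≤
          Z n ω * Real.sqrt (1 - (Z n ω)^2) * cond true 1 0 +
          (1.85 * Real.sqrt (Z n ω * (1 - Z n ω)) - Z n ω * Real.sqrt (1 - (Z n ω)^2)) *
            cond true 0 1
        rw [Real.sqrt_mul (sq_nonneg _), Real.sqrt_sq h0]
        simp
      | false =>
        show Real.sqrt (Z (n+1) ω * (1 - Z (n+1) ω)) ≤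
          Z n ω * Real.sqrt (1 - (Z n ω)^2) * cond false 1 0 +
          (1.85 * Real.sqrt (Z n ω * (1 - Z n ω)) - Z n ω * Real.sqrt (1 - (Z n ω)^2)) *
            cond false 0 1
        obtain ⟨hw1, hw2⟩ := hω.2 hB
        have := sqQ_minus h0 h1 hw1 (by linarith [hw2])
        simpa using this
    -- independence products
    have hprod1 : ∫ ω, g (Z n ω) * χb (B (n+1) ω) ∂μ
        = (∫ ω, g (Z n ω) ∂μ) * ∫ ω, χb (B (n+1) ω) ∂μ :=
      (hBZ.comp hgm hχbm).integral_fun_mul_eq_mul_integral hintg.aestronglyMeasurable hintχ.aestronglyMeasurable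
    have hprod2 : ∫ ω, m (Z n ω) * χb' (B (n+1) ω) ∂μ
        = (∫ ω, m (Z n ω) ∂μ) * ∫ ω, χb' (B (n+1) ω) ∂μ :=
      (hBZ.comp hmm hχb'm).integral_fun_mul_eq_mul_integral hintm.aestronglyMeasurable hintχ'.aestronglyMeasurable
    -- value of ∫ χ
    have hsetmeas : MeasurableSet {ω | B (n+1) ω = true} :=
      hBmeas (n+1) (MeasurableSet.singleton true)
    have hχval : ∫ ω, χb (B (n+1) ω) ∂μ = 1/2 := by
      have hind : (fun ω => χb (B (n+1) ω))
          = Set.indicator {ω | B (n+1) ω = true} (fun _ => (1:ℝ)) := by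
        funext ω
        rw [Set.indicator_apply]
        show cond (B (n+1) ω) (1:ℝ) 0 = _
        by_cases h : B (n+1) ω = true <;> simp [h]
      rw [hind, integral_indicator_const (1:ℝ) hsetmeas, measureReal_def, hBhalf (n+1)]
      simp [ENNReal.toReal_div]
    have hχ'val : ∫ ω, χb' (B (n+1) ω) ∂μ = 1/2 := by
      have hsum : (fun ω => χb' (B (n+1) ω))
          = fun ω => 1 - χb (B (n+1) ω) := by
        funext ω
        show cond (B (n+1) ω) (0:ℝ) 1 = 1 - cond (B (n+1) ω) (1:ℝ) 0
        by_cases h : B (n+1) ω = true <;> simp [h]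
      rw [hsum, integral_sub (integrable_const 1) hintχ, integral_const, probReal_univ, hχval]
      norm_num
    -- conclusion
    have hsum_id : (fun ω => g (Z n ω) + m (Z n ω))
        = fun ω => 1.85 * Real.sqrt (Z n ω * (1 - Z n ω)) := by
      funext ω
      show Z n ω * Real.sqrt (1 - (Z n ω)^2) +
        (1.85 * Real.sqrt (Z n ω * (1 - Z n ω)) - Z n ω * Real.sqrt (1 - (Z n ω)^2)) = _
      ring
    calc ∫ ω, Real.sqrt (Z (n+1) ω * (1 - Z (n+1) ω)) ∂μ
        ≤ ∫ ω, (g (Z n ω) * χb (B (n+1) ω) + m (Z n ω) * χb' (B (n+1) ω)) ∂μ :=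
          integral_mono_ae (hQint (n+1)) (hintgχ.add hintmχ) hae
      _ = (∫ ω, g (Z n ω) ∂μ) * (1/2) + (∫ ω, m (Z n ω) ∂μ) * (1/2) := by
          rw [integral_add hintgχ hintmχ, hprod1, hprod2, hχval, hχ'val]
      _ = (1/2) * ∫ ω, (g (Z n ω) + m (Z n ω)) ∂μ := by
          rw [integral_add hintg hintm]; ring
      _ = (1/2) * (1.85 * ∫ ω, Real.sqrt (Z n ω * (1 - Z n ω)) ∂μ) := by
          rw [hsum_id, integral_const_mul]
      _ ≤ (1/2) * (1.85 * ((1/2) * (1.85/2)^n)) := by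
          have h185 : (0:ℝ) ≤ 1.85 := by norm_num
          apply mul_le_mul_of_nonneg_left (mul_le_mul_of_nonneg_left ih h185) (by norm_num)
      _ = (1/2) * (1.85/2)^(n+1) := by ring
end

section
/- Let $(B_n)_{n\geq 1}$ be i.i.d. Bernoulli(1/2) and define the process $A_n$ by $A_0 = a_0 > 0$, $A_{n+1} = 2A_n$ if $B_{n+1}=1$ and $A_{n+1} = A_n - 1$ if $B_{n+1}=0$. Then for every $\beta$ with $0 < \beta < a_0$ and every $n \in \mathbb{N}$, $\mathbb{P}\big(A_n \geq \beta \, 2^{\sum_{i=1}^n B_i}\big) \geq 1 - \frac{2}{2^{(a_0-\beta)/2}}$. -/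
open MeasureTheory ProbabilityTheory

noncomputable def Lf : (n : ℕ) → (Fin n → Bool) → ℝ
  | 0, _ => 0
  | (n+1), v => if v 0 = true then Lf n (fun i => v i.succ) / 2
      else 1 + Lf n (fun i => v i.succ)

lemma key_ineq_s5 (u s : ℝ) (hu : 0 < u) (hs : 0 < s) (hs2 : s^2 = 2) :
    min 1 (2*u^2) / 2 + min 1 (2*(s*u)) / 2 ≤ min 1 (2*u) := by
  have hs54 : (5:ℝ)/4 < s := by nlinarith
  rcases le_or_gt 1 (2*u) with h | h
  · rw [min_eq_left h]
    have h1 : min 1 (2*u^2) ≤ 1 := min_le_left _ _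
    have h2 : min 1 (2*(s*u)) ≤ 1 := min_le_left _ _
    linarith
  · rw [min_eq_right h.le]
    have h1 : min 1 (2*u^2) ≤ 2*u^2 := min_le_right _ _
    rcases le_or_gt 1 (2*(s*u)) with h2 | h2
    · have h3 : min 1 (2*(s*u)) ≤ 1 := min_le_left _ _
      have hu4 : s ≤ 4 * u := by nlinarith
      nlinarith [mul_nonpos_of_nonneg_of_nonpos (by linarith : (0:ℝ) ≤ 4*u - s)
        (by linarith : 2*u - 1 ≤ 0)]
    · have h3 : min 1 (2*(s*u)) ≤ 2*(s*u) := min_le_right _ _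
      have hu4 : 4 * u ≤ s := by nlinarith
      have hs85 : s ≤ 8/5 := by nlinarith
      nlinarith

noncomputable def gb (c : ℝ) : ℝ := min 1 (2 * (2:ℝ) ^ (-(c/2)))

lemma gb_step (c : ℝ) : gb (2*c) / 2 + gb (c-1) / 2 ≤ gb c := by
  have h2 : (0:ℝ) ≤ 2 := by norm_num
  set u : ℝ := (2:ℝ) ^ (-(c/2)) with hu
  set s : ℝ := (2:ℝ) ^ ((1:ℝ)/2) with hs
  have hupos : 0 < u := Real.rpow_pos_of_pos (by norm_num) _
  have hspos : 0 < s := Real.rpow_pos_of_pos (by norm_num) _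
  have hs2 : s ^ 2 = 2 := by
    rw [hs, ← Real.rpow_natCast ((2:ℝ) ^ ((1:ℝ)/2)) 2, ← Real.rpow_mul h2]
    norm_num
  have h1 : (2:ℝ) ^ (-(2*c/2)) = u ^ 2 := by
    rw [hu, ← Real.rpow_natCast ((2:ℝ) ^ (-(c/2))) 2, ← Real.rpow_mul h2]
    congr 1; push_cast; ring
  have h2' : (2:ℝ) ^ (-((c-1)/2)) = s * u := by
    rw [hs, hu, ← Real.rpow_add (by norm_num : (0:ℝ) < 2)]
    congr 1; ring
  have := key_ineq_s5 u s hupos hspos hs2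
  unfold gb
  rw [h1, h2']
  exact this

open Classical in
noncomputable def Nb (n : ℕ) (c : ℝ) : ℕ :=
  (Finset.univ.filter (fun v : Fin n → Bool => c < Lf n v)).card

lemma Nb_zero (c : ℝ) : Nb 0 c = if c < 0 then 1 else 0 := by
  classical
  unfold Nb
  rcases lt_or_ge c 0 with h | h
  · rw [if_pos h]
    rw [Finset.filter_true_of_mem (fun v _ => by simpa [Lf] using h)]
    simp
  · rw [if_neg (not_lt.mpr h)]
    rw [Finset.filter_false_of_mem (fun v _ => by simp [Lf]; linarith)]
    simp

lemma Nb_succ (n : ℕ) (c : ℝ) : Nb (n+1) c = Nb n (2*c) + Nb n (c-1) := by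
  classical
  unfold Nb
  rw [Finset.card_filter, Finset.card_filter, Finset.card_filter]
  rw [← Equiv.sum_comp (Fin.consEquiv (fun _ : Fin (n+1) => Bool))
    (fun w => if c < Lf (n+1) w then 1 else 0)]
  rw [Fintype.sum_prod_type, Fintype.sum_bool]
  congr 1
  · apply Finset.sum_congr rfl
    intro v _
    have : Lf (n+1) (Fin.consEquiv (fun _ : Fin (n+1) => Bool) (true, v)) = Lf n v / 2 := by
      simp [Fin.consEquiv, Lf, Fin.cons_succ]
    rw [this]
    congr 1
    simp only [eq_iff_iff]
    rw [lt_div_iff₀ (by norm_num : (0:ℝ) < 2)]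
    constructor <;> intro <;> linarith
  · apply Finset.sum_congr rfl
    intro v _
    have : Lf (n+1) (Fin.consEquiv (fun _ : Fin (n+1) => Bool) (false, v)) = 1 + Lf n v := by
      simp [Fin.consEquiv, Lf, Fin.cons_succ]
    rw [this]
    congr 1
    simp only [eq_iff_iff]
    constructor <;> intro <;> linarith

lemma Nb_le (n : ℕ) (c : ℝ) : (Nb n c : ℝ) ≤ 2 ^ n * gb c := by
  induction n generalizing c with
  | zero =>
    rw [Nb_zero]
    rcases lt_or_ge c 0 with h | h
    · rw [if_pos h]
      have h1 : (1:ℝ) ≤ (2:ℝ) ^ (-(c/2)) := Real.one_le_rpow (by norm_num) (by linarith)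
      simp only [pow_zero, one_mul, Nat.cast_one, gb]
      exact le_min le_rfl (by linarith)
    · rw [if_neg (not_lt.mpr h)]
      have : (0:ℝ) ≤ gb c := le_min (by norm_num) (by positivity)
      simpa using by positivity
  | succ n ih =>
    rw [Nb_succ]
    push_cast
    calc (Nb n (2*c) : ℝ) + (Nb n (c-1) : ℝ) ≤ 2^n * gb (2*c) + 2^n * gb (c-1) :=
          add_le_add (ih _) (ih _)
      _ = 2^(n+1) * (gb (2*c)/2 + gb (c-1)/2) := by ring
      _ ≤ 2^(n+1) * gb c := by
          have := gb_step c
          have h2 : (0:ℝ) ≤ 2^(n+1) := by positivity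
          nlinarith

def Sc (n : ℕ) (v : Fin n → Bool) : ℕ := ∑ i, if v i then 1 else 0

lemma Sc_snoc (n : ℕ) (v : Fin n → Bool) (b : Bool) :
    Sc (n+1) (Fin.snoc v b) = Sc n v + (if b then 1 else 0) := by
  unfold Sc
  rw [Fin.sum_univ_castSucc]
  simp [Fin.snoc_castSucc, Fin.snoc_last]

lemma Sc_succ (n : ℕ) (v : Fin (n+1) → Bool) :
    Sc (n+1) v = (if v 0 then 1 else 0) + Sc n (fun i => v i.succ) := by
  unfold Sc
  rw [Fin.sum_univ_succ]

lemma tail_snoc' (n : ℕ) (v : Fin (n+1) → Bool) (b : Bool) :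
    (fun i : Fin (n+1) => (Fin.snoc v b : Fin (n+2) → Bool) i.succ)
      = Fin.snoc (fun i : Fin n => v i.succ) b := by
  funext i
  induction i using Fin.lastCases with
  | last => rw [Fin.succ_last, Fin.snoc_last, Fin.snoc_last]
  | cast j => rw [Fin.snoc_castSucc, Fin.succ_castSucc, Fin.snoc_castSucc]

lemma Lf_snoc (n : ℕ) (v : Fin n → Bool) (b : Bool) :
    Lf (n+1) (Fin.snoc v b)
      = Lf n v + (if b then 0 else (((2:ℝ) ^ Sc n v)⁻¹)) := by
  induction n with
  | zero =>
    show (if (Fin.snoc v b : Fin 1 → Bool) 0 = true then _ else _) = _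
    have h0 : (Fin.snoc v b : Fin 1 → Bool) 0 = b := by
      have : (0 : Fin 1) = Fin.last 0 := rfl
      rw [this, Fin.snoc_last]
    rw [h0]
    cases b <;> simp [Lf, Sc]
  | succ n ih =>
    show (if (Fin.snoc v b : Fin (n+2) → Bool) 0 = true then _ else _) = _
    have h0 : (Fin.snoc v b : Fin (n+2) → Bool) 0 = v 0 := by
      have : (0 : Fin (n+2)) = Fin.castSucc (0 : Fin (n+1)) := rfl
      rw [this, Fin.snoc_castSucc]
    rw [h0, tail_snoc' n v b, ih]
    have hRHS : Lf (n+1) v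
        = if v 0 = true then Lf n (fun i => v i.succ) / 2
            else 1 + Lf n (fun i => v i.succ) := rfl
    rw [hRHS, Sc_succ]
    cases hv : v 0 <;> simp only [if_true, if_false, Bool.false_eq_true, hv]
    · cases b <;> simp <;> ring
    · cases b <;> simp [pow_add] <;> ring

lemma cylinder_measure {Ω : Type*} [MeasurableSpace Ω] (μ : Measure Ω)
    [IsProbabilityMeasure μ]
    (B : ℕ → Ω → Bool) (hBmeas : ∀ n, Measurable (B n))
    (hBindep : iIndepFun B μ)
    (hBhalf : ∀ n, μ {ω | B n ω = true} = 1/2)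
    (n : ℕ) (v : Fin n → Bool) :
    μ {ω | ∀ i : Fin n, B ((i:ℕ)+1) ω = v i} = 2⁻¹ ^ n := by
  classical
  have hhalf' : ∀ j (b : Bool), μ (B j ⁻¹' {b}) = 2⁻¹ := by
    intro j b
    have ht : μ (B j ⁻¹' {true}) = 2⁻¹ := by
      have : B j ⁻¹' {true} = {ω | B j ω = true} := by ext ω; simp
      rw [this, hBhalf j, one_div]
    cases b
    · have hc : B j ⁻¹' {false} = (B j ⁻¹' {true})ᶜ := by
        ext ω
        simp only [Set.mem_preimage, Set.mem_singleton_iff, Set.mem_compl_iff]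
        cases h : B j ω <;> simp
      rw [hc, prob_compl_eq_one_sub ((hBmeas j) (measurableSet_singleton true)), ht]
      rw [ENNReal.one_sub_inv_two]
    · exact ht
  set S : Finset ℕ := (Finset.range n).image (· + 1) with hS
  set sets : ℕ → Set Bool := fun j => {b | ∀ i : Fin n, (i:ℕ)+1 = j → b = v i} with hsets
  have hmeas : ∀ j ∈ S, MeasurableSet (sets j) := fun j _ => (Set.to_countable _).measurableSet
  have hinter : {ω | ∀ i : Fin n, B ((i:ℕ)+1) ω = v i} = ⋂ j ∈ S, B j ⁻¹' sets j := by
    ext ω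
    simp only [Set.mem_setOf_eq, Set.mem_iInter, Set.mem_preimage, hS, Finset.mem_image,
      Finset.mem_range, hsets]
    constructor
    · rintro H j ⟨a, ha, rfl⟩
      intro i hi
      have : i = (⟨a, ha⟩ : Fin n) := Fin.ext (Nat.succ_injective hi)
      subst this
      exact H ⟨a, ha⟩
    · intro H i
      exact H ((i:ℕ)+1) ⟨i, i.isLt, rfl⟩ i rfl
  have hsingle : ∀ a (ha : a < n), sets (a+1) = {v ⟨a, ha⟩} := by
    intro a ha
    ext b
    simp only [hsets, Set.mem_setOf_eq, Set.mem_singleton_iff]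
    constructor
    · intro H; exact H ⟨a, ha⟩ rfl
    · rintro rfl i hi
      have : i = (⟨a, ha⟩ : Fin n) := Fin.ext (Nat.succ_injective hi)
      rw [this]
  rw [hinter, hBindep.measure_inter_preimage_eq_mul S hmeas]
  rw [hS, Finset.prod_image (by intro a _ b _ h; simp only at h; omega)]
  rw [Finset.prod_congr rfl (fun a ha => ?_), Finset.prod_const, Finset.card_range]
  rw [hsingle a (Finset.mem_range.mp ha), hhalf']

theorem exponent_process_bound {Ω : Type*} [MeasurableSpace Ω] (μ : Measure Ω)
    [IsProbabilityMeasure μ]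
    (B : ℕ → Ω → Bool) (hBmeas : ∀ n, Measurable (B n))
    (hBindep : iIndepFun B μ)
    (hBhalf : ∀ n, μ {ω | B n ω = true} = 1/2)
    (A : ℕ → Ω → ℝ) (a0 : ℝ) (ha0 : 0 < a0)
    (hA0 : ∀ ω, A 0 ω = a0)
    (hrec : ∀ n ω,
      (B (n+1) ω = true → A (n+1) ω = 2 * A n ω) ∧
      (B (n+1) ω = false → A (n+1) ω = A n ω - 1)) :
    ∀ β : ℝ, 0 < β → β < a0 → ∀ n : ℕ,
      (μ {ω | A n ω ≥
        β * 2 ^ (∑ i ∈ Finset.range n, (if B (i+1) ω then 1 else 0))}).toReal ≥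
      1 - 2 / (2 : ℝ) ^ ((a0 - β) / 2) := by
  intro β hβ0 hβa n
  classical
  set c : ℝ := a0 - β with hc
  have hA : ∀ m ω, A m ω
      = 2 ^ (Sc m (fun i : Fin m => B ((i:ℕ)+1) ω))
        * (a0 - Lf m (fun i : Fin m => B ((i:ℕ)+1) ω)) := by
    intro m
    induction m with
    | zero => intro ω; simp [hA0, Sc, Lf]
    | succ m ih =>
      intro ω
      have hv : (fun i : Fin (m+1) => B ((i:ℕ)+1) ω)
          = Fin.snoc (fun i : Fin m => B ((i:ℕ)+1) ω) (B (m+1) ω) := by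
        funext i
        induction i using Fin.lastCases with
        | last => rw [Fin.snoc_last, Fin.val_last]
        | cast j => rw [Fin.snoc_castSucc, Fin.coe_castSucc]
      rw [hv, Sc_snoc, Lf_snoc]
      have hpow : ((2:ℝ) ^ Sc m (fun i : Fin m => B ((i:ℕ)+1) ω)) ≠ 0 := by positivity
      cases hB : B (m+1) ω
      · rw [(hrec m ω).2 hB, ih ω]
        simp only [Bool.false_eq_true, if_false, Nat.add_zero]
        field_simp
        ring
      · rw [(hrec m ω).1 hB, ih ω]
        simp only [if_true]
        rw [pow_succ]
        ring
  have hbits : ∀ ω, (∑ i ∈ Finset.range n, (if B (i+1) ω then 1 else 0))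
      = Sc n (fun i : Fin n => B ((i:ℕ)+1) ω) := fun ω =>
    (Fin.sum_univ_eq_sum_range (fun i => if B (i+1) ω then 1 else 0) n).symm
  have hev : {ω | A n ω ≥
        β * 2 ^ (∑ i ∈ Finset.range n, (if B (i+1) ω then 1 else 0))}
      = {ω | Lf n (fun i : Fin n => B ((i:ℕ)+1) ω) ≤ c} := by
    ext ω
    simp only [Set.mem_setOf_eq]
    rw [hbits ω, hA n ω]
    have hp : (0:ℝ) < 2 ^ (Sc n (fun i : Fin n => B ((i:ℕ)+1) ω)) := by positivity
    constructor
    · intro h; nlinarith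
    · intro h; nlinarith
  set T : Finset (Fin n → Bool) := Finset.univ.filter (fun v => Lf n v ≤ c) with hT
  have hunion : {ω | Lf n (fun i : Fin n => B ((i:ℕ)+1) ω) ≤ c}
      = ⋃ v ∈ T, {ω | ∀ i : Fin n, B ((i:ℕ)+1) ω = v i} := by
    ext ω
    simp only [Set.mem_setOf_eq, Set.mem_iUnion, exists_prop, hT, Finset.mem_filter,
      Finset.mem_univ, true_and]
    constructor
    · intro h
      exact ⟨fun i => B ((i:ℕ)+1) ω, h, fun i => rfl⟩
    · rintro ⟨v, hv, hvb⟩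
      have hfe : (fun i : Fin n => B ((i:ℕ)+1) ω) = v := funext hvb
      rw [hfe]; exact hv
  have hdisj : (T : Set (Fin n → Bool)).PairwiseDisjoint
      (fun v => {ω | ∀ i : Fin n, B ((i:ℕ)+1) ω = v i}) := by
    intro v _ w _ hvw
    rw [Function.onFun, Set.disjoint_left]
    intro ω h1 h2
    exact hvw (funext fun i => (h1 i).symm.trans (h2 i))
  have hmeasC : ∀ v : Fin n → Bool,
      MeasurableSet {ω | ∀ i : Fin n, B ((i:ℕ)+1) ω = v i} := by
    intro v
    have hiI : {ω | ∀ i : Fin n, B ((i:ℕ)+1) ω = v i}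
        = ⋂ i : Fin n, (B ((i:ℕ)+1)) ⁻¹' {v i} := by
      ext ω; simp
    rw [hiI]
    exact MeasurableSet.iInter fun i => (hBmeas _) (measurableSet_singleton _)
  have hmeasure : μ {ω | Lf n (fun i : Fin n => B ((i:ℕ)+1) ω) ≤ c}
      = T.card * 2⁻¹ ^ n := by
    rw [hunion, measure_biUnion_finset hdisj (fun v _ => hmeasC v)]
    rw [Finset.sum_congr rfl (fun v _ => cylinder_measure μ B hBmeas hBindep hBhalf n v)]
    rw [Finset.sum_const, nsmul_eq_mul]
  rw [hev, hmeasure]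
  have hTcard : (T.card : ℝ) + (Nb n c : ℝ) = 2 ^ n := by
    have h1 : T.card + (Finset.univ.filter (fun v : Fin n → Bool => ¬ Lf n v ≤ c)).card
        = (Finset.univ : Finset (Fin n → Bool)).card :=
      Finset.card_filter_add_card_filter_not _
    have h2 : (Finset.univ.filter (fun v : Fin n → Bool => ¬ Lf n v ≤ c))
        = (Finset.univ.filter (fun v : Fin n → Bool => c < Lf n v)) := by
      apply Finset.filter_congr; intro v _; simp [not_le]
    have h3 : Nb n c = (Finset.univ.filter (fun v : Fin n → Bool => c < Lf n v)).card := by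
      unfold Nb; congr 1
    have h4 : (Finset.univ : Finset (Fin n → Bool)).card = 2 ^ n := by
      simp [Finset.card_univ]
    have : T.card + Nb n c = 2 ^ n := by rw [h3, ← h2, h1, h4]
    exact_mod_cast congrArg (Nat.cast : ℕ → ℝ) this
  have hNb := Nb_le n c
  have hgb : gb c ≤ 2 / (2:ℝ) ^ ((a0-β)/2) := by
    have hm : gb c ≤ 2 * (2:ℝ) ^ (-(c/2)) := min_le_right _ _
    rw [Real.rpow_neg (by norm_num : (0:ℝ) ≤ 2)] at hm
    rw [div_eq_mul_inv]
    rw [hc] at hm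
    exact hm
  have htor : ((T.card : ENNReal) * 2⁻¹ ^ n).toReal = (T.card : ℝ) * (2⁻¹ : ℝ) ^ n := by
    rw [ENNReal.toReal_mul, ENNReal.toReal_pow, ENNReal.toReal_inv]
    simp
  rw [htor]
  have h2n : (0:ℝ) < 2^n := by positivity
  have hinv : (2:ℝ)^n * (2⁻¹:ℝ)^n = 1 := by
    rw [← mul_pow]; norm_num
  have hcardR : (T.card : ℝ) = 2^n - Nb n c := by linarith
  have hple : (1 : ℝ) - gb c ≤ (T.card : ℝ) * (2⁻¹:ℝ)^n := by
    rw [hcardR, sub_mul]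
    have hinvpos : (0:ℝ) < (2⁻¹:ℝ)^n := by positivity
    nlinarith [hNb]
  linarith
end

section
/- Let $(B_n)_{n\geq 1}$ be i.i.d. Bernoulli(1/2) and define the process $Z_n^u$ by $Z_0^u = z_0 \in (0,1)$, $Z_{n+1}^u = (Z_n^u)^2$ if $B_{n+1}=1$ and $Z_{n+1}^u = 2Z_n^u$ if $B_{n+1}=0$. Then for every $\beta > 0$ with $2^{-\beta} > z_0$ and every $n$, $\mathbb{P}\big(Z_n^u \leq 2^{-\beta \, 2^{\sum_{i=1}^n B_i}}\big) \geq 1 - 2^{1+\beta/2}\sqrt{z_0}$. -/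
open MeasureTheory ProbabilityTheory
open scoped ENNReal

noncomputable section UpperProcessAux

/-- number of `true`s among `f 0, ..., f (m-1)` -/
def bitS (f : ℕ → Bool) (m : ℕ) : ℕ := ∑ i ∈ Finset.range m, (if f i then 1 else 0)

/-- accumulated loss -/
def bitL (n : ℕ) (f : ℕ → Bool) : ℝ :=
  ∑ m ∈ Finset.range n, if f m then 0 else ((2:ℝ) ^ bitS f m)⁻¹

lemma bitS_congr {f g : ℕ → Bool} {m : ℕ} (h : ∀ i < m, f i = g i) :
    bitS f m = bitS g m := by
  unfold bitS
  exact Finset.sum_congr rfl fun i hi => by rw [h i (Finset.mem_range.mp hi)]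

lemma bitL_congr {f g : ℕ → Bool} {n : ℕ} (h : ∀ i < n, f i = g i) :
    bitL n f = bitL n g := by
  unfold bitL
  refine Finset.sum_congr rfl fun m hm => ?_
  have hm' := Finset.mem_range.mp hm
  rw [h m hm', bitS_congr (fun i hi => h i (lt_trans hi hm'))]

lemma bitS_succ' (f : ℕ → Bool) (m : ℕ) :
    bitS f (m+1) = (if f 0 then 1 else 0) + bitS (fun i => f (i+1)) m := by
  unfold bitS
  rw [Finset.sum_range_succ', add_comm]

lemma bitL_succ' (n : ℕ) (f : ℕ → Bool) :
    bitL (n+1) f = if f 0 then bitL n (fun i => f (i+1)) / 2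
      else 1 + bitL n (fun i => f (i+1)) := by
  unfold bitL
  rw [Finset.sum_range_succ']
  have h0 : bitS f 0 = 0 := rfl
  cases hf : f 0 with
  | true =>
    have hb : ∀ m, bitS f (m+1) = 1 + bitS (fun i => f (i+1)) m := by
      intro m; rw [bitS_succ', hf]; simp
    simp only [hf, if_true, add_zero]
    rw [Finset.sum_div]
    refine Finset.sum_congr rfl fun m _ => ?_
    rw [hb, pow_add, pow_one, mul_inv]
    by_cases hfm : f (m+1) = true
    · simp [hfm]
    · rw [if_neg hfm, if_neg hfm]
      ring
  | false =>
    have hb : ∀ m, bitS f (m+1) = bitS (fun i => f (i+1)) m := by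
      intro m; rw [bitS_succ', hf]; simp
    simp only [hf, Bool.false_eq_true, if_false, h0, pow_zero, inv_one]
    rw [add_comm]
    congr 1
    exact Finset.sum_congr rfl fun m _ => by rw [hb]

lemma bitL_nonneg (n : ℕ) (f : ℕ → Bool) : 0 ≤ bitL n f := by
  unfold bitL
  refine Finset.sum_nonneg fun m _ => ?_
  split <;> positivity

/-- the bounding function -/
def phi (δ : ℝ) : ℝ := min 1 ((2:ℝ) ^ (1 - δ/2))

lemma phi_nonneg (δ : ℝ) : 0 ≤ phi δ :=
  le_min zero_le_one (Real.rpow_nonneg (by norm_num) _)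

lemma phi_le_one (δ : ℝ) : phi δ ≤ 1 := min_le_left _ _

lemma phi_le_rpow (δ : ℝ) : phi δ ≤ (2:ℝ) ^ (1 - δ/2) := min_le_right _ _

lemma phi_eq_one {δ : ℝ} (h : δ ≤ 2) : phi δ = 1 := by
  refine min_eq_left (Real.one_le_rpow one_le_two (by linarith))

lemma two_rpow_threehalf_le_three : (2:ℝ) ^ ((3:ℝ)/2) ≤ 3 := by
  have h1 : (0:ℝ) < 2 := by norm_num
  have hc : (0:ℝ) < (2:ℝ) ^ ((3:ℝ)/2) := Real.rpow_pos_of_pos h1 _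
  have hsq : (2:ℝ) ^ ((3:ℝ)/2) * (2:ℝ) ^ ((3:ℝ)/2) = 8 := by
    rw [← Real.rpow_add h1]
    have h3 : (3:ℝ)/2 + (3:ℝ)/2 = ((3:ℕ):ℝ) := by norm_num
    rw [h3, Real.rpow_natCast]
    norm_num
  nlinarith

lemma phi_key (δ : ℝ) : phi (2*δ) + phi (δ-1) ≤ 2 * phi δ := by
  by_cases hδ : δ ≤ 2
  · rw [phi_eq_one hδ]
    have := phi_le_one (2*δ); have := phi_le_one (δ-1); linarith
  · push_neg at hδ
    have h2 : (0:ℝ) < 2 := by norm_num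
    have hφδ : phi δ = (2:ℝ) ^ (1 - δ/2) :=
      min_eq_right (le_of_lt (Real.rpow_lt_one_of_one_lt_of_neg one_lt_two (by linarith)))
    set t : ℝ := (2:ℝ) ^ (-(δ/2)) with ht
    have htpos : 0 < t := Real.rpow_pos_of_pos h2 _
    have hthalf : t ≤ 1/2 := by
      have : (2:ℝ) ^ (-(δ/2)) ≤ (2:ℝ) ^ (-1 : ℝ) :=
        Real.rpow_le_rpow_left_iff one_lt_two |>.mpr (by linarith)
      rw [Real.rpow_neg_one] at this
      simpa [ht] using this
    have hδform : (2:ℝ) ^ (1 - δ/2) = 2 * t := by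
      rw [show (1 - δ/2 : ℝ) = 1 + (-(δ/2)) by ring, Real.rpow_add h2, Real.rpow_one]
    have h2δ : (2:ℝ) ^ (1 - (2*δ)/2) = 2 * (t * t) := by
      rw [show (1 - (2*δ)/2 : ℝ) = 1 + ((-(δ/2)) + (-(δ/2))) by ring,
        Real.rpow_add h2, Real.rpow_add h2, Real.rpow_one]
    have hδ1 : (2:ℝ) ^ (1 - (δ-1)/2) = (2:ℝ) ^ ((3:ℝ)/2) * t := by
      rw [show (1 - (δ-1)/2 : ℝ) = (3:ℝ)/2 + (-(δ/2)) by ring, Real.rpow_add h2]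
    have hb1 : phi (2*δ) ≤ 2 * (t * t) := by rw [← h2δ]; exact phi_le_rpow _
    have hb2 : phi (δ-1) ≤ (2:ℝ) ^ ((3:ℝ)/2) * t := by rw [← hδ1]; exact phi_le_rpow _
    have hc := two_rpow_threehalf_le_three
    have hcpos : (0:ℝ) < (2:ℝ) ^ ((3:ℝ)/2) := Real.rpow_pos_of_pos h2 _
    rw [hφδ, hδform]
    nlinarith

/-- extend a finite boolean vector to `ℕ → Bool` -/
def extb (n : ℕ) (b : Fin n → Bool) : ℕ → Bool := fun i => if h : i < n then b ⟨i, h⟩ else false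

open Classical in
/-- number of boolean strings of length `n` whose loss exceeds `δ` -/
noncomputable def cnt (n : ℕ) (δ : ℝ) : ℕ :=
  (Finset.univ.filter (fun b : Fin n → Bool => δ < bitL n (extb n b))).card

lemma extb_tail (n : ℕ) (b : Fin (n+1) → Bool) :
    (fun i => extb (n+1) b (i+1)) = extb n (Fin.tail b) := by
  funext i
  simp only [extb, Fin.tail]
  by_cases h : i < n
  · rw [dif_pos (by omega : i + 1 < n + 1), dif_pos h]
    rfl
  · rw [dif_neg (by omega), dif_neg h]

lemma cnt_succ (n : ℕ) (δ : ℝ) : cnt (n+1) δ = cnt n (2*δ) + cnt n (δ-1) := by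
  classical
  unfold cnt
  rw [Finset.card_filter, Finset.card_filter, Finset.card_filter]
  rw [← Equiv.sum_comp (Fin.consEquiv (fun _ : Fin (n+1) => Bool))
    (fun b : Fin (n+1) → Bool => if δ < bitL (n+1) (extb (n+1) b) then 1 else 0)]
  rw [Fintype.sum_prod_type, Fintype.sum_bool]
  have key : ∀ (x : Bool) (v : Fin n → Bool),
      bitL (n+1) (extb (n+1) ((Fin.consEquiv (fun _ : Fin (n+1) => Bool)) (x, v)))
        = if x then bitL n (extb n v) / 2 else 1 + bitL n (extb n v) := by
    intro x v
    set b : Fin (n+1) → Bool := (Fin.consEquiv (fun _ : Fin (n+1) => Bool)) (x, v) with hb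
    have hb0 : b 0 = x := by simp [hb]
    have hbt : Fin.tail b = v := by
      funext i; simp [hb, Fin.tail]
    have h0 : extb (n+1) b 0 = x := by
      rw [extb, dif_pos (Nat.succ_pos n)]; exact hb0
    rw [bitL_succ', h0, extb_tail, hbt]
  have keyT : ∀ v : Fin n → Bool,
      bitL (n+1) (extb (n+1) ((Fin.consEquiv (fun _ : Fin (n+1) => Bool)) (true, v)))
        = bitL n (extb n v) / 2 := by
    intro v; rw [key true v]; simp
  have keyF : ∀ v : Fin n → Bool,
      bitL (n+1) (extb (n+1) ((Fin.consEquiv (fun _ : Fin (n+1) => Bool)) (false, v)))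
        = 1 + bitL n (extb n v) := by
    intro v; rw [key false v]; simp
  have h1 : ∀ v : Fin n → Bool,
      (if δ < bitL (n+1) (extb (n+1) ((Fin.consEquiv (fun _ : Fin (n+1) => Bool)) (true, v))) then (1:ℕ) else 0)
        = if 2*δ < bitL n (extb n v) then 1 else 0 := by
    intro v
    rw [keyT v]
    exact if_congr (by constructor <;> intro <;> linarith) rfl rfl
  have h2 : ∀ v : Fin n → Bool,
      (if δ < bitL (n+1) (extb (n+1) ((Fin.consEquiv (fun _ : Fin (n+1) => Bool)) (false, v))) then (1:ℕ) else 0)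
        = if δ - 1 < bitL n (extb n v) then 1 else 0 := by
    intro v
    rw [keyF v]
    exact if_congr (by constructor <;> intro <;> linarith) rfl rfl
  rw [Finset.sum_congr rfl (fun v _ => h1 v), Finset.sum_congr rfl (fun v _ => h2 v)]

lemma cnt_le (n : ℕ) (δ : ℝ) : (cnt n δ : ℝ) ≤ 2 ^ n * phi δ := by
  induction n generalizing δ with
  | zero =>
    by_cases h : δ < 0
    · have hone : cnt 0 δ ≤ 1 := by
        refine le_trans (Finset.card_filter_le _ _) ?_
        simp
      have hφ : phi δ = 1 := phi_eq_one (by linarith)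
      rw [hφ]
      norm_num
      exact_mod_cast hone
    · have hzero : cnt 0 δ = 0 := by
        unfold cnt
        rw [Finset.card_eq_zero, Finset.filter_eq_empty_iff]
        intro b _
        have : bitL 0 (extb 0 b) = 0 := by simp [bitL]
        rw [this]
        exact fun hc => h hc
      rw [hzero]
      simpa using phi_nonneg δ
  | succ n ih =>
    rw [cnt_succ]
    push_cast
    calc (cnt n (2*δ) : ℝ) + cnt n (δ-1) ≤ 2 ^ n * phi (2*δ) + 2 ^ n * phi (δ-1) :=
          add_le_add (ih _) (ih _)
      _ = 2 ^ n * (phi (2*δ) + phi (δ-1)) := by ring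
      _ ≤ 2 ^ n * (2 * phi δ) := by
          have h2n : (0:ℝ) ≤ 2 ^ n := by positivity
          exact mul_le_mul_of_nonneg_left (phi_key δ) h2n
      _ = 2 ^ (n+1) * phi δ := by ring

end UpperProcessAux

theorem upper_process_bound {Ω : Type*} [MeasurableSpace Ω] (μ : Measure Ω)
    [IsProbabilityMeasure μ]
    (B : ℕ → Ω → Bool) (hBmeas : ∀ n, Measurable (B n))
    (hBindep : iIndepFun B μ)
    (hBhalf : ∀ n, μ {ω | B n ω = true} = 1/2)
    (Zu : ℕ → Ω → ℝ) (z0 : ℝ) (hz0 : z0 ∈ Set.Ioo (0:ℝ) 1)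
    (hZ0 : ∀ ω, Zu 0 ω = z0)
    (hrec : ∀ n ω,
      (B (n+1) ω = true → Zu (n+1) ω = (Zu n ω)^2) ∧
      (B (n+1) ω = false → Zu (n+1) ω = 2 * Zu n ω)) :
    ∀ β : ℝ, 0 < β → z0 < (2:ℝ) ^ (-β) → ∀ n : ℕ,
      (μ {ω | Zu n ω ≤
        (2:ℝ) ^ (-(β * 2 ^ (∑ i ∈ Finset.range n, (if B (i+1) ω then 1 else 0))))}).toReal ≥
      1 - 2 ^ (1 + β / 2) * Real.sqrt z0 := by
  classical
  intro β hβ hz0β n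
  obtain ⟨hz0pos, hz0lt⟩ := hz0
  set c : ℝ := Real.logb 2 z0 with hc
  set δ : ℝ := -c - β with hδdef
  -- Part A: pathwise identity
  have hpath : ∀ m ω, 0 < Zu m ω ∧
      Real.logb 2 (Zu m ω)
        = 2 ^ (bitS (fun i => B (i+1) ω) m) * (c + bitL m (fun i => B (i+1) ω)) := by
    intro m ω
    induction m with
    | zero =>
      refine ⟨by rw [hZ0]; exact hz0pos, ?_⟩
      rw [hZ0]
      simp [bitS, bitL, hc]
    | succ m ihm =>
      obtain ⟨hpos, hlog⟩ := ihm
      have hS : bitS (fun i => B (i+1) ω) (m+1)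
          = bitS (fun i => B (i+1) ω) m + (if B (m+1) ω then 1 else 0) := by
        unfold bitS; rw [Finset.sum_range_succ]
      have hL : bitL (m+1) (fun i => B (i+1) ω)
          = bitL m (fun i => B (i+1) ω)
            + (if B (m+1) ω then 0 else ((2:ℝ) ^ bitS (fun i => B (i+1) ω) m)⁻¹) := by
        unfold bitL; rw [Finset.sum_range_succ]
      cases hB : B (m+1) ω with
      | true =>
        have hz : Zu (m+1) ω = (Zu m ω)^2 := (hrec m ω).1 hB
        refine ⟨by rw [hz]; positivity, ?_⟩
        rw [hz, hS, hL, hB]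
        simp only [if_true, if_pos]
        rw [Real.logb_pow, hlog]
        push_cast
        rw [pow_succ]
        ring
      | false =>
        have hz : Zu (m+1) ω = 2 * Zu m ω := (hrec m ω).2 hB
        refine ⟨by rw [hz]; positivity, ?_⟩
        rw [hz, hS, hL, hB]
        simp only [if_false, Bool.false_eq_true, add_zero]
        rw [Real.logb_mul (by norm_num) (ne_of_gt hpos), Real.logb_self_eq_one one_lt_two,
          hlog]
        have hne : ((2:ℝ) ^ bitS (fun i => B (i+1) ω) m) ≠ 0 := by positivity
        field_simp
        ring
  -- event equivalence
  have hevent : ∀ ω,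
      (Zu n ω ≤ (2:ℝ) ^ (-(β * 2 ^ (∑ i ∈ Finset.range n, (if B (i+1) ω then 1 else 0)))))
        ↔ bitL n (fun i => B (i+1) ω) ≤ δ := by
    intro ω
    obtain ⟨hpos, hlog⟩ := hpath n ω
    have hSn : (∑ i ∈ Finset.range n, (if B (i+1) ω then 1 else 0))
        = bitS (fun i => B (i+1) ω) n := rfl
    rw [hSn]
    rw [← Real.logb_le_iff_le_rpow one_lt_two hpos, hlog]
    have hp : (0:ℝ) < 2 ^ (bitS (fun i => B (i+1) ω) n) := by positivity
    rw [show -(β * 2 ^ (bitS (fun i => B (i+1) ω) n))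
        = 2 ^ (bitS (fun i => B (i+1) ω) n) * (-β) by ring]
    rw [mul_le_mul_iff_right₀ hp]
    constructor <;> intro h <;> simp only [hδdef] at * <;> linarith
  -- the bad event
  set E : Set Ω := {ω | δ < bitL n (fun i => B (i+1) ω)} with hE
  -- cells
  set cell : (Fin n → Bool) → Set Ω := fun b => {ω | ∀ i : Fin n, B (i+1) ω = b i} with hcell
  have hcellmeas : ∀ b, MeasurableSet (cell b) := by
    intro b
    have : cell b = ⋂ i : Fin n, (B (i+1)) ⁻¹' {b i} := by
      ext ω; simp [hcell, Set.mem_iInter]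
    rw [this]
    exact MeasurableSet.iInter fun i => hBmeas _ trivial
  have hBprob : ∀ (j : ℕ) (x : Bool), μ ((B j) ⁻¹' {x}) = 2⁻¹ := by
    intro j x
    have htrue : μ ((B j) ⁻¹' {true}) = 2⁻¹ := by
      have : (B j) ⁻¹' {true} = {ω | B j ω = true} := rfl
      rw [this, hBhalf j]
      rw [ENNReal.div_eq_inv_mul, mul_one]
    cases x with
    | true => exact htrue
    | false =>
      have hcompl : (B j) ⁻¹' {false} = ((B j) ⁻¹' {true})ᶜ := by
        ext ω
        simp only [Set.mem_preimage, Set.mem_singleton_iff, Set.mem_compl_iff]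
        cases h : B j ω <;> simp [h]
      rw [hcompl, measure_compl (hBmeas j trivial) (measure_ne_top μ _), htrue,
        measure_univ]
      exact ENNReal.one_sub_inv_two
  -- measure of a cell
  have hcellmeasure : ∀ b : Fin n → Bool, μ (cell b) = 2⁻¹ ^ n := by
    intro b
    set S : Finset ℕ := (Finset.range n).image (· + 1) with hSdef
    set sets : ℕ → Set Bool := fun j => {x | ∀ h : j - 1 < n, x = b ⟨j - 1, h⟩} with hsets
    have hinj : Set.InjOn (· + 1) (Finset.range n) := fun a _ a' _ h => by simpa using h
    have hcelleq : cell b = ⋂ j ∈ S, (B j) ⁻¹' sets j := by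
      ext ω
      simp only [hcell, Set.mem_setOf_eq, Set.mem_iInter, hSdef, Finset.mem_image,
        Finset.mem_range, hsets, Set.mem_preimage, Set.mem_setOf_eq]
      constructor
      · rintro h j ⟨i, hi, rfl⟩ hlt
        have : i + 1 - 1 = i := by omega
        simp only [this] at hlt ⊢
        exact h ⟨i, hlt⟩
      · intro h i
        have := h (i + 1) ⟨i, i.isLt, rfl⟩
        have h1 : (i:ℕ) + 1 - 1 = i := by omega
        simp only [h1] at this
        exact (this i.isLt).trans (by congr)
    have hmeas : ∀ j, j ∈ S → MeasurableSet (sets j) := fun j _ => trivial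
    have := hBindep.measure_inter_preimage_eq_mul S hmeas
    rw [hcelleq, this]
    have hprod : ∀ j ∈ S, μ ((B j) ⁻¹' sets j) = 2⁻¹ := by
      intro j hj
      obtain ⟨i, hi, rfl⟩ := Finset.mem_image.mp hj
      rw [Finset.mem_range] at hi
      have h1 : i + 1 - 1 = i := by omega
      have : sets (i+1) = {b ⟨i, hi⟩} := by
        ext x
        simp only [hsets, Set.mem_setOf_eq, h1, Set.mem_singleton_iff]
        exact ⟨fun h => h hi, fun h _ => h⟩
      rw [this]
      exact hBprob _ _
    rw [Finset.prod_congr rfl hprod, Finset.prod_const]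
    congr 1
    rw [hSdef, Finset.card_image_of_injOn hinj, Finset.card_range]
  -- decomposition of the bad event
  set F : Finset (Fin n → Bool) :=
    Finset.univ.filter (fun b : Fin n → Bool => δ < bitL n (extb n b)) with hF
  have hEdecomp : E = ⋃ b ∈ F, cell b := by
    ext ω
    simp only [hE, Set.mem_setOf_eq, Set.mem_iUnion, hF, Finset.mem_filter,
      Finset.mem_univ, true_and, hcell]
    constructor
    · intro h
      refine ⟨fun i => B (i+1) ω, ?_, fun i => rfl⟩
      have : bitL n (extb n (fun i : Fin n => B (i+1) ω)) = bitL n (fun i => B (i+1) ω) := by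
        refine bitL_congr fun i hi => ?_
        simp [extb, dif_pos hi]
      rw [this]
      exact h
    · rintro ⟨b, hb, hbc⟩
      have : bitL n (fun i => B (i+1) ω) = bitL n (extb n b) := by
        refine bitL_congr fun i hi => ?_
        simp [extb, dif_pos hi, hbc ⟨i, hi⟩]
      rw [this]
      exact hb
  have hEmeas : MeasurableSet E := by
    rw [hEdecomp]
    exact F.measurableSet_biUnion fun b _ => hcellmeas b
  have hdisj : (↑F : Set (Fin n → Bool)).PairwiseDisjoint cell := by
    intro b _ b' _ hne
    rw [Function.onFun, Set.disjoint_left]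
    intro ω hωb hωb'
    exact hne (funext fun i => (hωb i).symm.trans (hωb' i))
  have hFcard : F.card = cnt n δ := rfl
  have hμE : μ E = (cnt n δ : ℝ≥0∞) * 2⁻¹ ^ n := by
    rw [hEdecomp, measure_biUnion_finset hdisj fun b _ => hcellmeas b]
    rw [Finset.sum_congr rfl fun b _ => hcellmeasure b, Finset.sum_const, hFcard,
      nsmul_eq_mul]
  -- real-valued bound on the bad event
  have hcnt := cnt_le n δ
  have hμEreal : (μ E).toReal ≤ phi δ := by
    rw [hμE]
    rw [ENNReal.toReal_mul, ENNReal.toReal_pow, ENNReal.toReal_inv]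
    simp only [ENNReal.toReal_natCast, ENNReal.toReal_ofNat]
    have h2n : (0:ℝ) < 2 ^ n := by positivity
    rw [inv_pow, ← div_eq_mul_inv, div_le_iff₀ h2n, mul_comm]
    exact hcnt
  -- final bound on phi δ
  have hphibound : phi δ ≤ 2 ^ (1 + β / 2) * Real.sqrt z0 := by
    refine le_trans (phi_le_rpow δ) (le_of_eq ?_)
    have h1 : 1 - δ/2 = (1 + β/2) + c * (1/2) := by rw [hδdef]; ring
    rw [h1, Real.rpow_add (by norm_num : (0:ℝ) < 2)]
    congr 1
    rw [Real.rpow_mul (by norm_num : (0:ℝ) ≤ 2), hc,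
      Real.rpow_logb (by norm_num) (by norm_num) hz0pos, Real.sqrt_eq_rpow]
  -- assemble
  have hseteq : {ω | Zu n ω ≤
      (2:ℝ) ^ (-(β * 2 ^ (∑ i ∈ Finset.range n, (if B (i+1) ω then 1 else 0))))} = Eᶜ := by
    ext ω
    simp only [Set.mem_setOf_eq, Set.mem_compl_iff, hE, not_lt]
    exact hevent ω
  rw [hseteq, measure_compl hEmeas (measure_ne_top μ E), measure_univ]
  rw [ENNReal.toReal_sub_of_le (prob_le_one) ENNReal.one_ne_top, ENNReal.toReal_one]
  linarith [hμEreal, hphibound]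
end

section
/- The equation $y = \frac{1}{2(2^{1/2}-1)} y^{1/2} + \frac{1}{4(2^{3/4}-1)} y^{1/4} + \frac{1}{4(2^{7/8}-1)} y^{1/8}$ has a unique solution $y^* \geq 1$ in the positive reals, and $y^* \leq 2.87$. -/
private lemma rpow_pow_eq (B : ℝ) (hB : 0 ≤ B) (p : ℝ) (n : ℕ) :
    (B ^ p) ^ n = B ^ (p * n) := by
  rw [← Real.rpow_natCast (B ^ p) n, ← Real.rpow_mul hB]

private lemma fp_contra (a b c t t' : ℝ) (ha : 0 < a) (hb : 0 < b) (hc : 0 < c)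
    (ht' : 0 < t') (htt : t' < t)
    (h1 : t ^ 8 = a * t ^ 4 + b * t ^ 2 + c * t)
    (h2 : t' ^ 8 = a * t' ^ 4 + b * t' ^ 2 + c * t') : False := by
  have ht : 0 < t := ht'.trans htt
  have h4 : t' ^ 4 < t ^ 4 := pow_lt_pow_left₀ htt ht'.le (by norm_num)
  have h6 : t' ^ 6 < t ^ 6 := pow_lt_pow_left₀ htt ht'.le (by norm_num)
  have h7 : t' ^ 7 < t ^ 7 := pow_lt_pow_left₀ htt ht'.le (by norm_num)
  have p1 : 0 < a * (t ^ 4 * t' ^ 4 * (t ^ 4 - t' ^ 4)) :=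
    mul_pos ha (mul_pos (mul_pos (pow_pos ht 4) (pow_pos ht' 4)) (by linarith))
  have p2 : 0 < b * (t ^ 2 * t' ^ 2 * (t ^ 6 - t' ^ 6)) :=
    mul_pos hb (mul_pos (mul_pos (pow_pos ht 2) (pow_pos ht' 2)) (by linarith))
  have p3 : 0 < c * (t * t' * (t ^ 7 - t' ^ 7)) :=
    mul_pos hc (mul_pos (mul_pos ht ht') (by linarith))
  have e1 : t ^ 8 * t' ^ 8 = (a * t ^ 4 + b * t ^ 2 + c * t) * t' ^ 8 := by rw [h1]
  have e2 : t' ^ 8 * t ^ 8 = (a * t' ^ 4 + b * t' ^ 2 + c * t') * t ^ 8 := by rw [h2]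
  nlinarith [e1, e2, p1, p2, p3]

set_option maxHeartbeats 1000000 in
theorem fixed_point_bound :
    ∃ y : ℝ, 0 < y ∧
      y = 1 / (2 * ((2:ℝ)^((1:ℝ)/2) - 1)) * y ^ ((1:ℝ)/2)
        + 1 / (4 * ((2:ℝ)^((3:ℝ)/4) - 1)) * y ^ ((1:ℝ)/4)
        + 1 / (4 * ((2:ℝ)^((7:ℝ)/8) - 1)) * y ^ ((1:ℝ)/8) ∧
      1 ≤ y ∧ y ≤ 2.87 ∧
      ∀ y' : ℝ, 0 < y' →
        y' = 1 / (2 * ((2:ℝ)^((1:ℝ)/2) - 1)) * y' ^ ((1:ℝ)/2)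
          + 1 / (4 * ((2:ℝ)^((3:ℝ)/4) - 1)) * y' ^ ((1:ℝ)/4)
          + 1 / (4 * ((2:ℝ)^((7:ℝ)/8) - 1)) * y' ^ ((1:ℝ)/8) → y' = y := by
  set x4 : ℝ := (2:ℝ) ^ ((1:ℝ)/2) with hx4def
  set x6 : ℝ := (2:ℝ) ^ ((3:ℝ)/4) with hx6def
  set x7 : ℝ := (2:ℝ) ^ ((7:ℝ)/8) with hx7def
  have hx4pow : x4 ^ (2:ℕ) = 2 := by
    rw [hx4def, rpow_pow_eq 2 (by norm_num)]
    rw [show (1:ℝ)/2 * (2:ℕ) = 1 by norm_num, Real.rpow_one]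
  have hx6pow : x6 ^ (4:ℕ) = 8 := by
    rw [hx6def, rpow_pow_eq 2 (by norm_num)]
    rw [show (3:ℝ)/4 * (4:ℕ) = ((3:ℕ):ℝ) by norm_num, Real.rpow_natCast]
    norm_num
  have hx7pow : x7 ^ (8:ℕ) = 128 := by
    rw [hx7def, rpow_pow_eq 2 (by norm_num)]
    rw [show (7:ℝ)/8 * (8:ℕ) = ((7:ℕ):ℝ) by norm_num, Real.rpow_natCast]
    norm_num
  have hx4pos : (0:ℝ) < x4 := Real.rpow_pos_of_pos (by norm_num) _
  have hx6pos : (0:ℝ) < x6 := Real.rpow_pos_of_pos (by norm_num) _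
  have hx7pos : (0:ℝ) < x7 := Real.rpow_pos_of_pos (by norm_num) _
  have hx4lb : (1.41421:ℝ) < x4 :=
    lt_of_pow_lt_pow_left₀ 2 hx4pos.le (by rw [hx4pow]; norm_num)
  have hx4ub : x4 < 1.41422 :=
    lt_of_pow_lt_pow_left₀ 2 (by norm_num) (by rw [hx4pow]; norm_num)
  have hx6lb : (1.68179:ℝ) < x6 :=
    lt_of_pow_lt_pow_left₀ 4 hx6pos.le (by rw [hx6pow]; norm_num)
  have hx7lb : (1.83400:ℝ) < x7 :=
    lt_of_pow_lt_pow_left₀ 8 hx7pos.le (by rw [hx7pow]; norm_num)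
  set a : ℝ := 1 / (2 * (x4 - 1)) with hadef
  set b : ℝ := 1 / (4 * (x6 - 1)) with hbdef
  set c : ℝ := 1 / (4 * (x7 - 1)) with hcdef
  have hd4 : (0:ℝ) < 2 * (x4 - 1) := by linarith
  have hd6 : (0:ℝ) < 4 * (x6 - 1) := by linarith
  have hd7 : (0:ℝ) < 4 * (x7 - 1) := by linarith
  have ha : 0 < a := by rw [hadef]; positivity
  have hb : 0 < b := by rw [hbdef]; positivity
  have hc : 0 < c := by rw [hcdef]; positivity
  -- bounds on powers of 2.87
  have hu4pow : ((2.87:ℝ) ^ ((1:ℝ)/2)) ^ (2:ℕ) = 2.87 := by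
    rw [rpow_pow_eq 2.87 (by norm_num)]
    rw [show (1:ℝ)/2 * (2:ℕ) = 1 by norm_num, Real.rpow_one]
  have hu2pow : ((2.87:ℝ) ^ ((1:ℝ)/4)) ^ (4:ℕ) = 2.87 := by
    rw [rpow_pow_eq 2.87 (by norm_num)]
    rw [show (1:ℝ)/4 * (4:ℕ) = 1 by norm_num, Real.rpow_one]
  have hu1pow : ((2.87:ℝ) ^ ((1:ℝ)/8)) ^ (8:ℕ) = 2.87 := by
    rw [rpow_pow_eq 2.87 (by norm_num)]
    rw [show (1:ℝ)/8 * (8:ℕ) = 1 by norm_num, Real.rpow_one]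
  have hu4ub : (2.87:ℝ) ^ ((1:ℝ)/2) < 1.69411 :=
    lt_of_pow_lt_pow_left₀ 2 (by norm_num) (by rw [hu4pow]; norm_num)
  have hu2ub : (2.87:ℝ) ^ ((1:ℝ)/4) < 1.30158 :=
    lt_of_pow_lt_pow_left₀ 4 (by norm_num) (by rw [hu2pow]; norm_num)
  have hu1ub : (2.87:ℝ) ^ ((1:ℝ)/8) < 1.14087 :=
    lt_of_pow_lt_pow_left₀ 8 (by norm_num) (by rw [hu1pow]; norm_num)
  have hu4pos : (0:ℝ) < (2.87:ℝ) ^ ((1:ℝ)/2) := Real.rpow_pos_of_pos (by norm_num) _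
  have hu2pos : (0:ℝ) < (2.87:ℝ) ^ ((1:ℝ)/4) := Real.rpow_pos_of_pos (by norm_num) _
  have hu1pos : (0:ℝ) < (2.87:ℝ) ^ ((1:ℝ)/8) := Real.rpow_pos_of_pos (by norm_num) _
  -- the function
  set F : ℝ → ℝ := fun y => a * y ^ ((1:ℝ)/2) + b * y ^ ((1:ℝ)/4) + c * y ^ ((1:ℝ)/8) - y
    with hFdef
  have hFcont : Continuous F := by
    apply Continuous.sub _ continuous_id
    exact ((continuous_const.mul (Real.continuous_rpow_const (by norm_num))).add
      (continuous_const.mul (Real.continuous_rpow_const (by norm_num)))).add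
      (continuous_const.mul (Real.continuous_rpow_const (by norm_num)))
  have hF1 : 0 ≤ F 1 := by
    have ha1 : 1 < a := by
      rw [hadef]
      rw [lt_div_iff₀ hd4]
      linarith
    simp only [hFdef, Real.one_rpow]
    nlinarith
  have hF287 : F 2.87 ≤ 0 := by
    simp only [hFdef]
    have t1 : a * (2.87:ℝ) ^ ((1:ℝ)/2) ≤ 1 / (2 * (1.41421 - 1)) * 1.69411 := by
      apply mul_le_mul
      · rw [hadef]
        apply one_div_le_one_div_of_le (by norm_num)
        linarith
      · linarith
      · exact hu4pos.le
      · norm_num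
    have t2 : b * (2.87:ℝ) ^ ((1:ℝ)/4) ≤ 1 / (4 * (1.68179 - 1)) * 1.30158 := by
      apply mul_le_mul
      · rw [hbdef]
        apply one_div_le_one_div_of_le (by norm_num)
        linarith
      · linarith
      · exact hu2pos.le
      · norm_num
    have t3 : c * (2.87:ℝ) ^ ((1:ℝ)/8) ≤ 1 / (4 * (1.83400 - 1)) * 1.14087 := by
      apply mul_le_mul
      · rw [hcdef]
        apply one_div_le_one_div_of_le (by norm_num)
        linarith
      · linarith
      · exact hu1pos.le
      · norm_num
    have : 1 / (2 * ((1.41421:ℝ) - 1)) * 1.69411 + 1 / (4 * (1.68179 - 1)) * 1.30158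
        + 1 / (4 * (1.83400 - 1)) * 1.14087 ≤ 2.87 := by norm_num
    linarith
  -- IVT
  have hsub : Set.Icc (F 2.87) (F 1) ⊆ F '' Set.Icc 1 2.87 :=
    intermediate_value_Icc' (by norm_num) hFcont.continuousOn
  obtain ⟨y, hy_mem, hy_eq⟩ := hsub ⟨hF287, hF1⟩
  obtain ⟨hy1, hy287⟩ := hy_mem
  have hypos : 0 < y := lt_of_lt_of_le one_pos hy1
  have hyeq : y = a * y ^ ((1:ℝ)/2) + b * y ^ ((1:ℝ)/4) + c * y ^ ((1:ℝ)/8) := by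
    simp only [hFdef] at hy_eq
    linarith
  -- conversion to polynomial form
  have tform : ∀ z : ℝ, 0 < z →
      z = a * z ^ ((1:ℝ)/2) + b * z ^ ((1:ℝ)/4) + c * z ^ ((1:ℝ)/8) →
      (z ^ ((1:ℝ)/8)) ^ 8 = a * (z ^ ((1:ℝ)/8)) ^ 4 + b * (z ^ ((1:ℝ)/8)) ^ 2
        + c * (z ^ ((1:ℝ)/8)) := by
    intro z hz hzeq
    have e8 : (z ^ ((1:ℝ)/8)) ^ (8:ℕ) = z := by
      rw [rpow_pow_eq z hz.le]
      rw [show (1:ℝ)/8 * (8:ℕ) = 1 by norm_num, Real.rpow_one]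
    have e4 : (z ^ ((1:ℝ)/8)) ^ (4:ℕ) = z ^ ((1:ℝ)/2) := by
      rw [rpow_pow_eq z hz.le]
      norm_num
    have e2 : (z ^ ((1:ℝ)/8)) ^ (2:ℕ) = z ^ ((1:ℝ)/4) := by
      rw [rpow_pow_eq z hz.le]
      norm_num
    rw [e8, e4, e2]
    exact hzeq
  refine ⟨y, hypos, hyeq, hy1, hy287, ?_⟩
  intro y' hy'pos hy'eq
  have ht := tform y hypos hyeq
  have ht' := tform y' hy'pos hy'eq
  have htpos : 0 < y ^ ((1:ℝ)/8) := Real.rpow_pos_of_pos hypos _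
  have ht'pos : 0 < y' ^ ((1:ℝ)/8) := Real.rpow_pos_of_pos hy'pos _
  rcases lt_trichotomy (y' ^ ((1:ℝ)/8)) (y ^ ((1:ℝ)/8)) with h | h | h
  · exact absurd (fp_contra a b c (y ^ ((1:ℝ)/8)) (y' ^ ((1:ℝ)/8))
      ha hb hc ht'pos h ht ht') (by simp)
  · have e8 : ∀ z : ℝ, 0 < z → (z ^ ((1:ℝ)/8)) ^ (8:ℕ) = z := by
      intro z hz
      rw [rpow_pow_eq z hz.le]
      rw [show (1:ℝ)/8 * (8:ℕ) = 1 by norm_num, Real.rpow_one]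
    calc y' = (y' ^ ((1:ℝ)/8)) ^ (8:ℕ) := (e8 y' hy'pos).symm
      _ = (y ^ ((1:ℝ)/8)) ^ (8:ℕ) := by rw [h]
      _ = y := e8 y hypos
  · exact absurd (fp_contra a b c (y' ^ ((1:ℝ)/8)) (y ^ ((1:ℝ)/8))
      ha hb hc htpos h ht' ht) (by simp)
end

section
/- Let $(B_n)_{n\geq 1}$ be i.i.d. Bernoulli(1/2) and define the process $E_n$ by $E_0 = e_0 \in [0,1]$, $E_{n+1} = E_n^2$ if $B_{n+1}=1$ and $E_{n+1} = E_n\sqrt{2-E_n^2}$ if $B_{n+1}=0$. Then for every $n$, $\mathbb{P}\big(E_n \geq 1 - 2^{-2^{\sum_{i=1}^n (1-B_i)}}\big) \geq 1 - 2\sqrt{2}\sqrt{1-e_0^2}$. -/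
open MeasureTheory ProbabilityTheory

noncomputable def wstep (a : ℝ) (b : Bool) : ℝ := if b then a - 1 else 2 * a

noncomputable def wwalk (a : ℝ) (b : ℕ → Bool) : ℕ → ℝ
  | 0 => a
  | n+1 => wstep (wwalk a b n) (b n)

noncomputable def ffn (a : ℝ) : ℝ := min 1 (2 * (2:ℝ) ^ (-a/2))

lemma ffn_nonneg (a : ℝ) : 0 ≤ ffn a := le_min one_pos.le (by positivity)

lemma ffn_le_one (a : ℝ) : ffn a ≤ 1 := min_le_left _ _

lemma ffn_of_neg {a : ℝ} (ha : a < 0) : ffn a = 1 := by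
  have h1 : (1:ℝ) ≤ (2:ℝ) ^ (-a/2) := by
    rw [show (1:ℝ) = (2:ℝ) ^ (0:ℝ) by simp]
    apply Real.rpow_le_rpow_left_iff (x := (2:ℝ)) (by norm_num) |>.2
    linarith
  have : (1:ℝ) ≤ 2 * (2:ℝ) ^ (-a/2) := by nlinarith [Real.rpow_nonneg (by norm_num : (0:ℝ) ≤ 2) (-a/2)]
  simp [ffn, min_eq_left this]

lemma ffn_key (a : ℝ) : ffn (a - 1) + ffn (2 * a) ≤ 2 * ffn a := by
  rcases le_or_gt 1 (2 * (2:ℝ) ^ (-a/2)) with h | h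
  · have : ffn a = 1 := min_eq_left h
    rw [this]
    linarith [ffn_le_one (a-1), ffn_le_one (2*a)]
  · set t : ℝ := (2:ℝ) ^ (-a/2) with ht
    have ht0 : 0 < t := Real.rpow_pos_of_pos (by norm_num) _
    have hthalf : t < 1/2 := by linarith
    have hfa : ffn a = 2 * t := min_eq_right h.le
    have hs2 : Real.sqrt 2 ^ 2 = 2 := Real.sq_sqrt (by norm_num)
    have hs2pos : (0:ℝ) < Real.sqrt 2 := Real.sqrt_pos.2 (by norm_num)
    -- ffn (2a) = 2 t^2
    have h2a : (2:ℝ) ^ (-(2*a)/2) = t^2 := by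
      rw [ht, ← Real.rpow_natCast ((2:ℝ)^(-a/2)) 2, ← Real.rpow_mul (by norm_num)]
      norm_num
      ring_nf
    have hf2a : ffn (2*a) ≤ 2 * t^2 := by
      rw [ffn, h2a]; exact min_le_right _ _
    -- ffn (a-1) ≤ min 1 (2 * sqrt 2 * t)
    have ha1 : (2:ℝ) ^ (-(a-1)/2) = Real.sqrt 2 * t := by
      have : -(a-1)/2 = 1/2 + (-a/2) := by ring
      rw [this, Real.rpow_add (by norm_num), ht, ← Real.sqrt_eq_rpow]
    have hfa1 : ffn (a-1) ≤ min 1 (2 * (Real.sqrt 2 * t)) := by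
      rw [ffn, ha1]
    rcases le_or_gt (2 * (Real.sqrt 2 * t)) 1 with h1 | h1
    · have : ffn (a-1) ≤ 2 * (Real.sqrt 2 * t) := hfa1.trans (min_le_right _ _)
      rw [hfa]
      -- need 2√2 t + 2t² ≤ 4t, using t ≤ 1/(2√2)
      have htle : t ≤ 1 / (2 * Real.sqrt 2) := by
        rw [le_div_iff₀ (by positivity)]; linarith
      nlinarith [hs2, hs2pos, ht0]
    · have : ffn (a-1) ≤ 1 := hfa1.trans (min_le_left _ _)
      rw [hfa]
      have htgt : 1 / (2 * Real.sqrt 2) < t := by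
        rw [div_lt_iff₀ (by positivity)]; nlinarith
      nlinarith [hs2, hs2pos, ht0, hthalf]

lemma wwalk_congr (a : ℝ) (b c : ℕ → Bool) (n : ℕ) (h : ∀ i < n, b i = c i) :
    wwalk a b n = wwalk a c n := by
  induction n with
  | zero => rfl
  | succ n ih =>
    simp only [wwalk, ih (fun i hi => h i (Nat.lt_succ_of_lt hi)), h n (Nat.lt_succ_self n)]

lemma wwalk_shift (a : ℝ) (b : ℕ → Bool) (n : ℕ) :
    wwalk a b (n+1) = wwalk (wstep a (b 0)) (fun i => b (i+1)) n := by
  induction n with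
  | zero => rfl
  | succ n ih =>
    rw [show wwalk a b (n+2) = wstep (wwalk a b (n+1)) (b (n+1)) from rfl, ih]
    rfl

noncomputable def extv {n : ℕ} (v : Fin n → Bool) : ℕ → Bool :=
  fun i => if h : i < n then v ⟨i, h⟩ else false

lemma count_bad (n : ℕ) (a : ℝ) :
    ((Finset.univ.filter (fun v : Fin n → Bool => wwalk a (extv v) n < 0)).card : ℝ)
      ≤ ffn a * 2 ^ n := by
  induction n generalizing a with
  | zero =>
    rcases lt_or_ge a 0 with h | h
    · have : (Finset.univ.filter (fun v : Fin 0 → Bool => wwalk a (extv v) 0 < 0)) = Finset.univ := by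
        apply Finset.filter_true_of_mem
        intro v _
        exact h
      rw [this, ffn_of_neg h]
      simp
    · have : (Finset.univ.filter (fun v : Fin 0 → Bool => wwalk a (extv v) 0 < 0)) = ∅ := by
        apply Finset.filter_false_of_mem
        intro v _
        exact not_lt.2 h
      rw [this]
      simp only [Finset.card_empty, Nat.cast_zero, pow_zero, mul_one]
      exact ffn_nonneg a
  | succ n ih =>
    have key : ∀ v : Fin (n+1) → Bool,
        wwalk a (extv v) (n+1) = wwalk (wstep a (v 0)) (extv (fun i : Fin n => v i.succ)) n := by
      intro v
      rw [wwalk_shift]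
      have h0 : extv v 0 = v 0 := by simp [extv]
      rw [h0]
      apply wwalk_congr
      intro i hi
      simp [extv, hi, Nat.succ_lt_succ hi]
    -- convert card to sum over Bool × (Fin n → Bool)
    classical
    rw [Finset.card_filter]
    push_cast
    rw [← Fintype.sum_equiv (Fin.consEquiv (fun _ => Bool))
      (fun p => if wwalk a (extv ((Fin.consEquiv (fun _ => Bool)) p)) (n+1) < 0 then (1:ℝ) else 0)
      (fun v => if wwalk a (extv v) (n+1) < 0 then (1:ℝ) else 0) (fun p => rfl)]
    rw [Fintype.sum_prod_type]
    have : ∀ b : Bool, ∑ v : Fin n → Bool,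
        (if wwalk a (extv ((Fin.consEquiv (fun _ => Bool)) (b, v))) (n+1) < 0 then (1:ℝ) else 0)
        ≤ ffn (wstep a b) * 2 ^ n := by
      intro b
      have hcv : ∀ v : Fin n → Bool,
          wwalk a (extv ((Fin.consEquiv (fun _ => Bool)) (b, v))) (n+1)
            = wwalk (wstep a b) (extv v) n := by
        intro v
        rw [key]
        simp [Fin.consEquiv]
      calc ∑ v : Fin n → Bool, (if wwalk a (extv ((Fin.consEquiv (fun _ => Bool)) (b, v))) (n+1) < 0 then (1:ℝ) else 0)
          = ∑ v : Fin n → Bool, (if wwalk (wstep a b) (extv v) n < 0 then (1:ℝ) else 0) := by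
            apply Finset.sum_congr rfl; intro v _; rw [hcv v]
        _ = ((Finset.univ.filter (fun v : Fin n → Bool => wwalk (wstep a b) (extv v) n < 0)).card : ℝ) := by
            rw [Finset.card_filter]; push_cast; rfl
        _ ≤ ffn (wstep a b) * 2 ^ n := ih _
    calc (∑ b : Bool, ∑ v : Fin n → Bool,
          (if wwalk a (extv ((Fin.consEquiv (fun _ => Bool)) (b, v))) (n+1) < 0 then (1:ℝ) else 0))
        ≤ ∑ b : Bool, ffn (wstep a b) * 2 ^ n := Finset.sum_le_sum (fun b _ => this b)
      _ = (ffn (a - 1) + ffn (2 * a)) * 2 ^ n := by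
          simp [wstep]; ring
      _ ≤ 2 * ffn a * 2 ^ n := by nlinarith [ffn_key a, pow_pos (show (0:ℝ) < 2 by norm_num) n]
      _ = ffn a * 2 ^ (n+1) := by ring

section Meas
open ENNReal
variable {Ω : Type*} [MeasurableSpace Ω] {μ : Measure Ω} [IsProbabilityMeasure μ]
variable {B : ℕ → Ω → Bool}

lemma single_meas (hBmeas : ∀ n, Measurable (B n))
    (hBhalf : ∀ n, μ {ω | B n ω = true} = 1/2) (i : ℕ) (c : Bool) :
    μ (B i ⁻¹' {c}) = 1/2 := by
  have htrue : B i ⁻¹' {true} = {ω | B i ω = true} := by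
    ext ω; simp
  cases c with
  | true => rw [htrue]; exact hBhalf i
  | false =>
    have hc : B i ⁻¹' {false} = (B i ⁻¹' {true})ᶜ := by
      ext ω; simp
    rw [hc, measure_compl (hBmeas i (measurableSet_singleton true)) (measure_ne_top μ _),
      measure_univ, htrue, hBhalf i]
    rw [show (1:ℝ≥0∞)/2 = 2⁻¹ by simp]
    exact ENNReal.one_sub_inv_two

lemma cyl_meas (hBmeas : ∀ n, Measurable (B n))
    (hBindep : iIndepFun B μ)
    (hBhalf : ∀ n, μ {ω | B n ω = true} = 1/2)
    (n : ℕ) (v : Fin n → Bool) :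
    μ {ω | ∀ i : Fin n, B (i.1+1) ω = v i} = (1/2 : ℝ≥0∞) ^ n := by
  classical
  set S : Finset ℕ := (Finset.range n).map ⟨Nat.succ, Nat.succ_injective⟩ with hS
  set sets : ℕ → Set Bool := fun i => ({extv v (i-1)} : Set Bool) with hsets
  have hmeas : ∀ i, i ∈ S → MeasurableSet (sets i) := fun i _ => trivial
  have hprod := hBindep.measure_inter_preimage_eq_mul S hmeas
  have hset : {ω | ∀ i : Fin n, B (i.1+1) ω = v i} = ⋂ i ∈ S, B i ⁻¹' sets i := by
    ext ω
    simp only [Set.mem_setOf_eq, Set.mem_iInter, hS, Finset.mem_map, Finset.mem_range,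
      Function.Embedding.coeFn_mk, Set.mem_preimage, Set.mem_singleton_iff, hsets]
    constructor
    · rintro h i ⟨j, hj, rfl⟩
      simp only [Nat.succ_sub_one, extv, hj, dif_pos]
      exact h ⟨j, hj⟩
    · intro h i
      have := h (i.1 + 1) ⟨i.1, i.2, rfl⟩
      simpa [extv, i.2] using this
  rw [hset, hprod]
  have : ∀ i ∈ S, μ (B i ⁻¹' sets i) = 1/2 := fun i _ => single_meas hBmeas hBhalf i _
  rw [Finset.prod_congr rfl this, Finset.prod_const]
  simp [hS]

lemma bad_union (n : ℕ) (a : ℝ) :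
    {ω | wwalk a (fun i => B (i+1) ω) n < 0} =
      ⋃ v ∈ Finset.univ.filter (fun v : Fin n → Bool => wwalk a (extv v) n < 0),
        {ω | ∀ i : Fin n, B (i.1+1) ω = v i} := by
  classical
  ext ω
  simp only [Set.mem_setOf_eq, Set.mem_iUnion, Finset.mem_filter, Finset.mem_univ, true_and]
  constructor
  · intro h
    refine ⟨fun i : Fin n => B (i.1+1) ω, ?_, fun i => rfl⟩
    rw [wwalk_congr a (extv (fun i : Fin n => B (i.1+1) ω)) (fun i => B (i+1) ω) n ?_]
    · exact h
    · intro i hi; simp [extv, hi]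
  · rintro ⟨v, hv, hω⟩
    rw [wwalk_congr a (fun i => B (i+1) ω) (extv v) n ?_]
    · exact hv
    · intro i hi
      rw [show extv v i = v ⟨i, hi⟩ by simp [extv, hi]]
      exact hω ⟨i, hi⟩

lemma bad_meas_le (hBmeas : ∀ n, Measurable (B n))
    (hBindep : iIndepFun B μ)
    (hBhalf : ∀ n, μ {ω | B n ω = true} = 1/2)
    (n : ℕ) (a : ℝ) :
    (μ {ω | wwalk a (fun i => B (i+1) ω) n < 0}).toReal ≤ ffn a := by
  classical
  rw [bad_union n a]
  set bf := Finset.univ.filter (fun v : Fin n → Bool => wwalk a (extv v) n < 0) with hbf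
  have hle : μ (⋃ v ∈ bf, {ω | ∀ i : Fin n, B (i.1+1) ω = v i}) ≤
      ∑ v ∈ bf, μ {ω | ∀ i : Fin n, B (i.1+1) ω = v i} := measure_biUnion_finset_le _ _
  have hsum : ∑ v ∈ bf, μ {ω | ∀ i : Fin n, B (i.1+1) ω = v i}
      = (bf.card : ℝ≥0∞) * (1/2) ^ n := by
    rw [Finset.sum_congr rfl (fun v _ => cyl_meas hBmeas hBindep hBhalf n v),
      Finset.sum_const, nsmul_eq_mul]
  have hne : ((bf.card : ℝ≥0∞) * (1/2) ^ n) ≠ ⊤ :=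
    ENNReal.mul_ne_top (ENNReal.natCast_ne_top _) (ENNReal.pow_ne_top (by norm_num))
  calc (μ (⋃ v ∈ bf, {ω | ∀ i : Fin n, B (i.1+1) ω = v i})).toReal
      ≤ ((bf.card : ℝ≥0∞) * (1/2) ^ n).toReal := by
        apply ENNReal.toReal_mono hne
        rw [← hsum]; exact hle
    _ = (bf.card : ℝ) * (1/2) ^ n := by
        rw [ENNReal.toReal_mul, ENNReal.toReal_pow]
        norm_num
    _ ≤ ffn a := by
        have hcb := count_bad n a
        rw [← hbf] at hcb
        have h2 : (0:ℝ) < (1/2) ^ n := by positivity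
        have h3 : ((2:ℝ))^n * (1/2)^n = 1 := by rw [← mul_pow]; norm_num
        calc (bf.card:ℝ) * (1/2)^n ≤ (ffn a * 2^n) * (1/2)^n :=
              mul_le_mul_of_nonneg_right hcb h2.le
          _ = ffn a := by rw [mul_assoc, h3, mul_one]

lemma bad_measurable (hBmeas : ∀ n, Measurable (B n)) (n : ℕ) (a : ℝ) :
    MeasurableSet {ω | wwalk a (fun i => B (i+1) ω) n < 0} := by
  classical
  rw [bad_union n a]
  apply Set.Finite.measurableSet_biUnion (Finset.finite_toSet _)
  intro v _
  have : {ω | ∀ i : Fin n, B (i.1+1) ω = v i} = ⋂ i : Fin n, (B (i.1+1)) ⁻¹' {v i} := by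
    ext ω; simp
  rw [this]
  exact MeasurableSet.iInter (fun i => hBmeas _ (measurableSet_singleton _))

end Meas

theorem E_process_close_to_one {Ω : Type*} [MeasurableSpace Ω] (μ : Measure Ω)
    [IsProbabilityMeasure μ]
    (B : ℕ → Ω → Bool) (hBmeas : ∀ n, Measurable (B n))
    (hBindep : iIndepFun B μ)
    (hBhalf : ∀ n, μ {ω | B n ω = true} = 1/2)
    (E : ℕ → Ω → ℝ) (e0 : ℝ) (he0 : e0 ∈ Set.Icc (0:ℝ) 1)
    (hE0 : ∀ ω, E 0 ω = e0)
    (hrec : ∀ n ω,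
      (B (n+1) ω = true → E (n+1) ω = (E n ω)^2) ∧
      (B (n+1) ω = false → E (n+1) ω = E n ω * Real.sqrt (2 - (E n ω)^2))) :
    ∀ n : ℕ,
      (μ {ω | E n ω ≥ 1 -
        (2:ℝ) ^ (-((2:ℝ) ^ (∑ i ∈ Finset.range n, (if B (i+1) ω then 0 else 1 : ℕ))))}).toReal ≥
      1 - 2 * Real.sqrt 2 * Real.sqrt (1 - e0^2) := by
  intro n
  have he00 := he0.1
  have he01 := he0.2
  have hD0nn : (0:ℝ) ≤ 1 - e0^2 := by nlinarith
  rcases eq_or_lt_of_le hD0nn with hD0 | hD0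
  · -- e0 = 1 case
    have he1 : e0 = 1 := by nlinarith
    have hEone : ∀ k ω, E k ω = 1 := by
      intro k
      induction k with
      | zero => intro ω; rw [hE0 ω, he1]
      | succ k ih =>
        intro ω
        rcases Bool.eq_false_or_eq_true (B (k+1) ω) with hb | hb
        · rw [(hrec k ω).1 hb, ih ω]
          norm_num
        · rw [(hrec k ω).2 hb, ih ω]
          norm_num
    have hset : {ω | E n ω ≥ 1 -
        (2:ℝ) ^ (-((2:ℝ) ^ (∑ i ∈ Finset.range n, (if B (i+1) ω then 0 else 1 : ℕ))))}
        = Set.univ := by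
      apply Set.eq_univ_of_forall
      intro ω
      show E n ω ≥ 1 - _
      rw [hEone n ω]
      have := Real.rpow_pos_of_pos (show (0:ℝ) < 2 by norm_num)
        (-((2:ℝ) ^ (∑ i ∈ Finset.range n, (if B (i+1) ω then 0 else 1 : ℕ))))
      linarith
    rw [hset, measure_univ, ENNReal.toReal_one, he1]
    norm_num
  · -- main case : 0 < 1 - e0^2
    set D0 : ℝ := 1 - e0^2 with hD0def
    set a0 : ℝ := - Real.logb 2 D0 - 1 with ha0def
    -- pathwise invariant
    have inv : ∀ k ω, 0 ≤ E k ω ∧ E k ω ≤ 1 ∧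
        1 - (E k ω)^2 ≤ (2:ℝ) ^ (-(((2:ℝ) ^ (∑ i ∈ Finset.range k, (if B (i+1) ω then 0 else 1 : ℕ)))
          + wwalk a0 (fun i => B (i+1) ω) k)) := by
      intro k ω
      induction k with
      | zero =>
        refine ⟨by rw [hE0]; exact he00, by rw [hE0]; exact he01, ?_⟩
        rw [hE0]
        simp only [Finset.range_zero, Finset.sum_empty, pow_zero]
        rw [show wwalk a0 (fun i => B (i+1) ω) 0 = a0 from rfl]
        rw [show -((1:ℝ) + a0) = Real.logb 2 D0 by rw [ha0def]; ring]
        rw [Real.rpow_logb (by norm_num) (by norm_num) hD0]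
      | succ k ih =>
        obtain ⟨h0, h1, h2⟩ := ih
        set Ek := E k ω with hEk
        set Sk : ℕ := ∑ i ∈ Finset.range k, (if B (i+1) ω then 0 else 1 : ℕ) with hSk
        set wk : ℝ := wwalk a0 (fun i => B (i+1) ω) k with hwk
        have hsum : ∑ i ∈ Finset.range (k+1), (if B (i+1) ω then 0 else 1 : ℕ)
            = Sk + (if B (k+1) ω then 0 else 1) := Finset.sum_range_succ _ _
        have hw : wwalk a0 (fun i => B (i+1) ω) (k+1) = wstep wk (B (k+1) ω) := rfl
        set R : ℝ := (2:ℝ) ^ (-(((2:ℝ) ^ Sk) + wk)) with hR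
        have hRpos : 0 < R := Real.rpow_pos_of_pos (by norm_num) _
        cases hb : B (k+1) ω with
        | true =>
          have hE : E (k+1) ω = Ek^2 := (hrec k ω).1 hb
          refine ⟨by rw [hE]; positivity, by rw [hE]; exact pow_le_one₀ h0 h1, ?_⟩
          rw [hE, hsum, hb, hw, hb]
          simp only [if_true, Nat.add_zero]
          rw [show wstep wk true = wk - 1 from rfl]
          rw [show -((2:ℝ) ^ Sk + (wk - 1)) = -((2:ℝ) ^ Sk + wk) + 1 by ring]
          rw [Real.rpow_add_one (by norm_num : (2:ℝ) ≠ 0), ← hR]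
          nlinarith [sq_nonneg Ek, sq_nonneg (1 - Ek^2)]
        | false =>
          have hE : E (k+1) ω = Ek * Real.sqrt (2 - Ek^2) := (hrec k ω).2 hb
          have hc : (0:ℝ) ≤ 2 - Ek^2 := by nlinarith
          have hsq : (E (k+1) ω)^2 = Ek^2 * (2 - Ek^2) := by
            rw [hE, mul_pow, Real.sq_sqrt hc]
          have hnn : 0 ≤ E (k+1) ω := by
            rw [hE]; exact mul_nonneg h0 (Real.sqrt_nonneg _)
          have hsq1 : (E (k+1) ω)^2 ≤ 1 := by nlinarith [sq_nonneg (1 - Ek^2)]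
          refine ⟨hnn, by nlinarith [sq_nonneg (E (k+1) ω - 1), sq_nonneg (E (k+1) ω + 1)], ?_⟩
          have h1m : 1 - (E (k+1) ω)^2 = (1 - Ek^2)^2 := by rw [hsq]; ring
          have hd : (0:ℝ) ≤ 1 - Ek^2 := by nlinarith
          have hle : (1 - Ek^2)^2 ≤ R^2 := pow_le_pow_left₀ hd h2 2
          rw [hsum, hb, hw, hb]
          rw [if_neg Bool.false_ne_true]
          rw [show wstep wk false = 2 * wk from rfl]
          have hexp : (2:ℝ) ^ (-((2:ℝ) ^ (Sk + 1) + 2 * wk)) = R^2 := by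
            rw [hR, ← Real.rpow_natCast ((2:ℝ) ^ (-((2:ℝ) ^ Sk + wk))) 2,
              ← Real.rpow_mul (by norm_num)]
            congr 1
            rw [pow_succ]
            push_cast
            ring
          rw [hexp, h1m]
          exact hle
    -- inclusion of good event
    have hsub : {ω | 0 ≤ wwalk a0 (fun i => B (i+1) ω) n} ⊆
        {ω | E n ω ≥ 1 -
          (2:ℝ) ^ (-((2:ℝ) ^ (∑ i ∈ Finset.range n, (if B (i+1) ω then 0 else 1 : ℕ))))} := by
      intro ω hω
      obtain ⟨h0, h1, h2⟩ := inv n ω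
      have hωw : (0:ℝ) ≤ wwalk a0 (fun i => B (i+1) ω) n := hω
      set Sn : ℕ := ∑ i ∈ Finset.range n, (if B (i+1) ω then 0 else 1 : ℕ) with hSn
      have hRle : (2:ℝ) ^ (-(((2:ℝ) ^ Sn) + wwalk a0 (fun i => B (i+1) ω) n))
          ≤ (2:ℝ) ^ (-((2:ℝ) ^ Sn)) :=
        Real.rpow_le_rpow_of_exponent_le (by norm_num) (by linarith)
      have hEE : (E n ω)^2 ≤ E n ω := by nlinarith
      show E n ω ≥ 1 - (2:ℝ) ^ (-((2:ℝ) ^ Sn))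
      nlinarith
    -- measure computation
    have hGc : {ω | 0 ≤ wwalk a0 (fun i => B (i+1) ω) n}
        = {ω | wwalk a0 (fun i => B (i+1) ω) n < 0}ᶜ := by
      ext ω
      simp [not_lt]
    have hmb : MeasurableSet {ω | wwalk a0 (fun i => B (i+1) ω) n < 0} :=
      bad_measurable hBmeas n a0
    have hμG : μ {ω | 0 ≤ wwalk a0 (fun i => B (i+1) ω) n}
        = 1 - μ {ω | wwalk a0 (fun i => B (i+1) ω) n < 0} := by
      rw [hGc, measure_compl hmb (measure_ne_top μ _), measure_univ]
    have hbadle : (μ {ω | wwalk a0 (fun i => B (i+1) ω) n < 0}).toReal ≤ ffn a0 :=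
      bad_meas_le hBmeas hBindep hBhalf n a0
    have hball : μ {ω | wwalk a0 (fun i => B (i+1) ω) n < 0} ≤ 1 := prob_le_one
    have hffn : ffn a0 ≤ 2 * Real.sqrt 2 * Real.sqrt D0 := by
      have h1 : ffn a0 ≤ 2 * (2:ℝ) ^ (-a0/2) := min_le_right _ _
      have h2 : (2:ℝ) ^ (-a0/2) = Real.sqrt 2 * Real.sqrt D0 := by
        rw [show -a0/2 = 1/2 + Real.logb 2 D0 * (1/2) by rw [ha0def]; ring]
        rw [Real.rpow_add (by norm_num), Real.rpow_mul (by norm_num),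
          Real.rpow_logb (by norm_num) (by norm_num) hD0,
          ← Real.sqrt_eq_rpow, ← Real.sqrt_eq_rpow]
      rw [h2] at h1
      linarith [h1]
    calc (μ {ω | E n ω ≥ 1 -
          (2:ℝ) ^ (-((2:ℝ) ^ (∑ i ∈ Finset.range n, (if B (i+1) ω then 0 else 1 : ℕ))))}).toReal
        ≥ (μ {ω | 0 ≤ wwalk a0 (fun i => B (i+1) ω) n}).toReal :=
          ENNReal.toReal_mono (measure_ne_top μ _) (measure_mono hsub)
      _ = 1 - (μ {ω | wwalk a0 (fun i => B (i+1) ω) n < 0}).toReal := by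
          rw [hμG, ENNReal.toReal_sub_of_le hball ENNReal.one_ne_top, ENNReal.toReal_one]
      _ ≥ 1 - ffn a0 := by linarith
      _ ≥ 1 - 2 * Real.sqrt 2 * Real.sqrt D0 := by linarith
end

section
/- Let $(B_n)$ be i.i.d. Bernoulli(1/2), $Z_n^u$ the process with $Z_0^u = z_0 \in (0,1)$, $Z_{n+1}^u = (Z_n^u)^2$ if $B_{n+1}=1$, $Z_{n+1}^u = 2Z_n^u$ if $B_{n+1}=0$, and $E(n,x)$ the binomial tail threshold satisfying $\sum_{i=E(n,x)}^n \binom{n}{i} \leq 2^n x \leq \sum_{i=E(n,x)-1}^n \binom{n}{i}$. Then for every $x \in (0,1)$ and $n$, $\mathbb{P}\big(Z_n^u \leq 2^{-2^{E(n,x)}}\big) \geq x - 2\sqrt{2}\sqrt{z_0} - \binom{n}{E(n,x)-1}2^{-n}$. -/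
open MeasureTheory ProbabilityTheory Finset
open scoped ENNReal

noncomputable section UPBT

def upbtCnt (f : ℕ → Bool) : ℕ → ℕ
  | 0 => 0
  | n+1 => upbtCnt f n + (if f (n+1) then 1 else 0)

noncomputable def upbtT (f : ℕ → Bool) : ℕ → ℝ
  | 0 => 0
  | n+1 => upbtT f n + (if f (n+1) then 0 else ((2:ℝ)⁻¹) ^ (upbtCnt f n))

def upbtCntV : (n : ℕ) → (Fin n → Bool) → ℕ
  | 0, _ => 0
  | n+1, v => (if v 0 then 1 else 0) + upbtCntV n (Fin.tail v)

noncomputable def upbtTV : (n : ℕ) → (Fin n → Bool) → ℝ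
  | 0, _ => 0
  | n+1, v => if v 0 then upbtTV n (Fin.tail v) / 2 else 1 + upbtTV n (Fin.tail v)

lemma upbtCnt_succ (f : ℕ → Bool) (n : ℕ) :
    upbtCnt f (n+1) = upbtCnt f n + (if f (n+1) then 1 else 0) := rfl

lemma upbtT_succ (f : ℕ → Bool) (n : ℕ) :
    upbtT f (n+1) = upbtT f n + (if f (n+1) then 0 else ((2:ℝ)⁻¹) ^ (upbtCnt f n)) := rfl

lemma upbtCntV_succ (n : ℕ) (v : Fin (n+1) → Bool) :
    upbtCntV (n+1) v = (if v 0 then 1 else 0) + upbtCntV n (Fin.tail v) := rfl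

lemma upbtTV_succ (n : ℕ) (v : Fin (n+1) → Bool) :
    upbtTV (n+1) v = if v 0 then upbtTV n (Fin.tail v) / 2 else 1 + upbtTV n (Fin.tail v) := rfl

lemma upbtCnt_shift (n : ℕ) (f : ℕ → Bool) :
    upbtCnt f (n+1) = (if f 1 then 1 else 0) + upbtCnt (fun k => f (k+1)) n := by
  induction n with
  | zero => simp [upbtCnt]
  | succ n ih =>
      rw [upbtCnt_succ f (n+1), ih, upbtCnt_succ (fun k => f (k+1)) n]
      omega

lemma upbtT_shift (n : ℕ) (f : ℕ → Bool) :
    upbtT f (n+1) = if f 1 then upbtT (fun k => f (k+1)) n / 2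
      else 1 + upbtT (fun k => f (k+1)) n := by
  induction n with
  | zero => simp [upbtT, upbtCnt]
  | succ n ih =>
      rw [upbtT_succ f (n+1), ih, upbtT_succ (fun k => f (k+1)) n, upbtCnt_shift]
      by_cases h1 : f 1 <;> by_cases h2 : f (n+1+1) <;>
        simp [h1, h2, pow_add, pow_succ] <;> ring

lemma upbt_bridge_cnt (n : ℕ) (f : ℕ → Bool) :
    upbtCnt f n = upbtCntV n (fun i : Fin n => f (i+1)) := by
  induction n generalizing f with
  | zero => rfl
  | succ n ih =>
      rw [upbtCnt_shift, ih (fun k => f (k+1)), upbtCntV_succ]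
      have ht : Fin.tail (fun i : Fin (n+1) => f (i+1)) = fun i : Fin n => f (i+1+1) := by
        funext i; simp [Fin.tail]
      rw [ht]
      rfl

lemma upbt_bridge_T (n : ℕ) (f : ℕ → Bool) :
    upbtT f n = upbtTV n (fun i : Fin n => f (i+1)) := by
  induction n generalizing f with
  | zero => rfl
  | succ n ih =>
      rw [upbtT_shift, ih (fun k => f (k+1)), upbtTV_succ]
      have ht : Fin.tail (fun i : Fin (n+1) => f (i+1)) = fun i : Fin n => f (i+1+1) := by
        funext i; simp [Fin.tail]
      rw [ht]
      rfl

lemma upbtCntV_le (n : ℕ) (v : Fin n → Bool) : upbtCntV n v ≤ n := by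
  induction n with
  | zero => exact le_refl 0
  | succ n ih =>
      rw [upbtCntV_succ]
      have := ih (Fin.tail v)
      split <;> omega


lemma card_split (n : ℕ) (P : (Fin (n+1) → Bool) → Prop) [DecidablePred P] :
    (univ.filter P).card
      = (univ.filter (fun v : Fin n → Bool => P (Fin.cons true v))).card
        + (univ.filter (fun v : Fin n → Bool => P (Fin.cons false v))).card := by
  simp only [Finset.card_filter]
  rw [← Fintype.sum_equiv (Fin.consEquiv (fun _ => Bool))
    (fun p => if P ((Fin.consEquiv (fun _ => Bool)) p) then 1 else 0)
    (fun v => if P v then 1 else 0) (fun p => rfl)]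
  rw [Fintype.sum_prod_type, Fintype.sum_bool]
  rfl

lemma cardFilter_ext {α : Type*} [Fintype α] (p q : α → Prop) [DecidablePred p]
    [DecidablePred q] (h : ∀ a, p a ↔ q a) :
    (univ.filter p).card = (univ.filter q).card := by
  congr 1
  exact Finset.filter_congr (fun a _ => h a)

lemma upbtCntV_cons (n : ℕ) (b : Bool) (v : Fin n → Bool) :
    upbtCntV (n+1) (Fin.cons b v) = (if b then 1 else 0) + upbtCntV n v := by
  simp [upbtCntV]

lemma upbtTV_cons (n : ℕ) (b : Bool) (v : Fin n → Bool) :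
    upbtTV (n+1) (Fin.cons b v) = if b then upbtTV n v / 2 else 1 + upbtTV n v := by
  simp [upbtTV]

lemma card_cntV_eq (n : ℕ) : ∀ k : ℕ,
    (univ.filter (fun v : Fin n → Bool => upbtCntV n v = k)).card = n.choose k := by
  induction n with
  | zero =>
      intro k
      match k with
      | 0 => simp [upbtCntV]
      | k+1 => simp [upbtCntV]
  | succ n ih =>
      intro k
      rw [card_split n (fun v => upbtCntV (n+1) v = k)]
      match k with
      | 0 =>
          have h1 : (univ.filter (fun v : Fin n → Bool => upbtCntV (n+1) (Fin.cons true v) = 0)).card = 0 := by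
            rw [Finset.card_eq_zero, Finset.filter_eq_empty_iff]
            intro v _
            rw [upbtCntV_cons]; simp
          have h2 := cardFilter_ext
            (fun v : Fin n → Bool => upbtCntV (n+1) (Fin.cons false v) = 0)
            (fun v : Fin n → Bool => upbtCntV n v = 0)
            (fun v => by simp only [upbtCntV_cons]; simp)
          rw [h1, h2, ih 0]
          simp
      | k+1 =>
          have h1 := cardFilter_ext
            (fun v : Fin n → Bool => upbtCntV (n+1) (Fin.cons true v) = k+1)
            (fun v : Fin n → Bool => upbtCntV n v = k)
            (fun v => by simp only [upbtCntV_cons]; simp; omega)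
          have h2 := cardFilter_ext
            (fun v : Fin n → Bool => upbtCntV (n+1) (Fin.cons false v) = k+1)
            (fun v : Fin n → Bool => upbtCntV n v = k+1)
            (fun v => by simp only [upbtCntV_cons]; simp)
          rw [h1, h2, ih k, ih (k+1), Nat.choose_succ_succ]

lemma upbt_rpow_eval : ((2:ℝ)^(-(3:ℝ)/2)) * ((2:ℝ)^(-(3:ℝ)/2)) = 1/8 := by
  rw [← Real.rpow_add (by norm_num)]
  norm_num

lemma upbt_rpow_eval' : ((2:ℝ)^((3:ℝ)/2)) * ((2:ℝ)^((3:ℝ)/2)) = 8 := by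
  rw [← Real.rpow_add (by norm_num)]
  norm_num

lemma upbt_min_ineq (u : ℝ) :
    min 1 ((2:ℝ)^(1-u)) + min 1 ((2:ℝ)^((3-u)/2)) ≤ 2 * min 1 ((2:ℝ)^(1-u/2)) := by
  set t : ℝ := (2:ℝ)^(-u/2) with htdef
  have ht0 : 0 < t := Real.rpow_pos_of_pos (by norm_num) _
  have h2u : (2:ℝ)^(1-u) = 2*(t*t) := by
    rw [show (1-u : ℝ) = 1 + (-u/2) + (-u/2) by ring, Real.rpow_add (by norm_num),
      Real.rpow_add (by norm_num), Real.rpow_one]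
    ring
  have h1u : (2:ℝ)^(1-u/2) = 2*t := by
    rw [show (1-u/2 : ℝ) = 1 + (-u/2) by ring, Real.rpow_add (by norm_num), Real.rpow_one]
  rcases le_or_gt u 2 with hu2 | hu2
  · have : (1:ℝ) ≤ (2:ℝ)^(1-u/2) := Real.one_le_rpow (by norm_num) (by linarith)
    rw [min_eq_left this]
    have l1 : min 1 ((2:ℝ)^(1-u)) ≤ 1 := min_le_left _ _
    have l2 : min 1 ((2:ℝ)^((3-u)/2)) ≤ 1 := min_le_left _ _
    linarith
  · have hle : (2:ℝ)^(1-u/2) ≤ 1 :=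
      Real.rpow_le_one_of_one_le_of_nonpos (by norm_num) (by linarith)
    have hmin1 : min 1 ((2:ℝ)^(1-u/2)) = 2*t := by
      rw [min_eq_right hle, h1u]
    rw [hmin1]
    have ht12 : t ≤ 1/2 := by
      have : (2:ℝ)^(-u/2) ≤ (2:ℝ)^(-(1:ℝ)) :=
        Real.rpow_le_rpow_of_exponent_le (by norm_num) (by linarith)
      have h21 : (2:ℝ)^(-(1:ℝ)) = 1/2 := by
        rw [Real.rpow_neg_one]; norm_num
      rw [h21] at this; exact this
    rcases le_or_gt u 3 with hu3 | hu3
    · -- mixed case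
      set a : ℝ := (2:ℝ)^(-(3:ℝ)/2) with hadef
      have ha2 : a*a = 1/8 := upbt_rpow_eval
      have ha0 : 0 < a := Real.rpow_pos_of_pos (by norm_num) _
      have hta : a ≤ t := Real.rpow_le_rpow_of_exponent_le (by norm_num) (by linarith)
      have l1 : min 1 ((2:ℝ)^(1-u)) ≤ 2*(t*t) := by rw [← h2u]; exact min_le_right _ _
      have l2 : min 1 ((2:ℝ)^((3-u)/2)) ≤ 1 := min_le_left _ _
      have key : 2*(t*t) + 1 ≤ 4*t := by
        nlinarith [mul_nonneg (sub_nonneg.2 hta) (sub_nonneg.2 ht12), ha2, ha0.le, sq_nonneg (a - 5/16)]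
      linarith
    · -- pure case
      set a : ℝ := (2:ℝ)^(-(3:ℝ)/2) with hadef
      set b : ℝ := (2:ℝ)^((3:ℝ)/2) with hbdef
      have ha2 : a*a = 1/8 := upbt_rpow_eval
      have hb2 : b*b = 8 := upbt_rpow_eval'
      have ha0 : 0 < a := Real.rpow_pos_of_pos (by norm_num) _
      have hb0 : 0 < b := Real.rpow_pos_of_pos (by norm_num) _
      have hta : t ≤ a := Real.rpow_le_rpow_of_exponent_le (by norm_num) (by linarith)
      have h3u : (2:ℝ)^((3-u)/2) = b * t := by
        rw [show ((3-u)/2 : ℝ) = 3/2 + (-u/2) by ring, Real.rpow_add (by norm_num)]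
      have l1 : min 1 ((2:ℝ)^(1-u)) ≤ 2*(t*t) := by rw [← h2u]; exact min_le_right _ _
      have l2 : min 1 ((2:ℝ)^((3-u)/2)) ≤ b*t := by rw [← h3u]; exact min_le_right _ _
      have hb3 : b ≤ 3 := by nlinarith
      have ha36 : a ≤ 36/100 := by nlinarith
      have h4 : 2*t + b ≤ 4 := by nlinarith
      have : t * (2*t + b) ≤ t * 4 := mul_le_mul_of_nonneg_left h4 ht0.le
      nlinarith

lemma card_tailV (n : ℕ) : ∀ u : ℝ,
    ((univ.filter (fun v : Fin n → Bool => u < upbtTV n v)).card : ℝ)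
      ≤ 2^n * min 1 ((2:ℝ)^(1 - u/2)) := by
  induction n with
  | zero =>
      intro u
      rcases lt_or_ge u 0 with hu | hu
      · have he : (univ.filter (fun v : Fin 0 → Bool => u < upbtTV 0 v)) = univ := by
          rw [Finset.filter_eq_self]
          intro v _
          show u < upbtTV 0 v
          have : upbtTV 0 v = 0 := rfl
          rw [this]; exact hu
        have hmin : min 1 ((2:ℝ)^(1-u/2)) = 1 :=
          min_eq_left (Real.one_le_rpow (by norm_num) (by linarith))
        rw [he, hmin]
        simp
      · have he : (univ.filter (fun v : Fin 0 → Bool => u < upbtTV 0 v)) = ∅ := by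
          rw [Finset.filter_eq_empty_iff]
          intro v _
          show ¬ u < upbtTV 0 v
          have : upbtTV 0 v = 0 := rfl
          rw [this]; linarith
        rw [he]
        have : (0:ℝ) ≤ min 1 ((2:ℝ)^(1-u/2)) :=
          le_min (by norm_num) (Real.rpow_pos_of_pos (by norm_num) _).le
        simp
        positivity
  | succ n ih =>
      intro u
      rw [card_split n (fun v => u < upbtTV (n+1) v)]
      have e1 : (univ.filter (fun v : Fin n → Bool => u < upbtTV (n+1) (Fin.cons true v))).card
          = (univ.filter (fun v : Fin n → Bool => 2*u < upbtTV n v)).card := by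
        apply cardFilter_ext
        intro v
        rw [upbtTV_cons]
        simp only [if_true]
        constructor <;> intro h <;> linarith
      have e2 : (univ.filter (fun v : Fin n → Bool => u < upbtTV (n+1) (Fin.cons false v))).card
          = (univ.filter (fun v : Fin n → Bool => u - 1 < upbtTV n v)).card := by
        apply cardFilter_ext
        intro v
        rw [upbtTV_cons]
        simp only [Bool.false_eq_true, if_false]
        constructor <;> intro h <;> linarith
      rw [e1, e2]
      push_cast
      have h1 := ih (2*u)
      have h2 := ih (u-1)
      have r1 : (1 - (2*u)/2 : ℝ) = 1 - u := by ring
      have r2 : (1 - (u-1)/2 : ℝ) = (3-u)/2 := by ring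
      rw [r1] at h1
      rw [r2] at h2
      have hm := upbt_min_ineq u
      have hp : (0:ℝ) ≤ 2^n := by positivity
      rw [pow_succ]
      nlinarith [mul_le_mul_of_nonneg_left hm hp]

lemma upbt_identity {Ω : Type*} (B : ℕ → Ω → Bool) (Zu : ℕ → Ω → ℝ) (z0 : ℝ)
    (hz0 : 0 < z0) (hZ0 : ∀ ω, Zu 0 ω = z0)
    (hrec : ∀ n ω,
      (B (n+1) ω = true → Zu (n+1) ω = (Zu n ω)^2) ∧
      (B (n+1) ω = false → Zu (n+1) ω = 2 * Zu n ω)) (ω : Ω) :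
    ∀ n : ℕ, Zu n ω = (2:ℝ) ^
      (-((2:ℝ) ^ (upbtCnt (fun k => B k ω) n) *
        ((-Real.logb 2 z0) - upbtT (fun k => B k ω) n))) := by
  set f : ℕ → Bool := fun k => B k ω with hf
  intro n
  induction n with
  | zero =>
      have hc : upbtCnt f 0 = 0 := rfl
      have ht : upbtT f 0 = 0 := rfl
      rw [hZ0 ω, hc, ht]
      rw [show (-((2:ℝ)^(0:ℕ) * ((-Real.logb 2 z0) - 0))) = Real.logb 2 z0 by
        simp]
      rw [Real.rpow_logb (by norm_num) (by norm_num) hz0]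
  | succ n ih =>
      set c := upbtCnt f n with hc
      set T := upbtT f n with hT
      set L0 := -Real.logb 2 z0 with hL0
      cases hB : f (n+1) with
      | true =>
          have hz : Zu (n+1) ω = (Zu n ω)^2 := (hrec n ω).1 hB
          have hc' : upbtCnt f (n+1) = c + 1 := by
            show upbtCnt f n + _ = _
            rw [hB]; rfl
          have ht' : upbtT f (n+1) = T := by
            show upbtT f n + _ = _
            rw [hB]; simp [hT]
          rw [hz, ih, hc', ht']
          rw [sq, ← Real.rpow_add (by norm_num)]
          congr 1
          rw [pow_succ]
          ring
      | false =>
          have hz : Zu (n+1) ω = 2 * Zu n ω := (hrec n ω).2 hB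
          have hc' : upbtCnt f (n+1) = c := by
            show upbtCnt f n + _ = _
            rw [hB]; simp [hc]
          have ht' : upbtT f (n+1) = T + ((2:ℝ)⁻¹)^c := by
            show upbtT f n + _ = _
            rw [hB]; simp [hT, hc]
          rw [hz, ih, hc', ht']
          rw [show (2:ℝ) * (2:ℝ)^(-((2:ℝ)^c * (L0 - T)))
              = (2:ℝ)^(1 + -((2:ℝ)^c * (L0 - T))) by
            rw [Real.rpow_add (by norm_num), Real.rpow_one]]
          congr 1
          have h2c : (2:ℝ)^c * ((2:ℝ)⁻¹)^c = 1 := by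
            rw [← mul_pow]; norm_num
          linear_combination -h2c

def upbtPad (n : ℕ) (v : Fin n → Bool) : ℕ → Bool :=
  fun k => if h : 1 ≤ k ∧ k ≤ n then v ⟨k-1, by omega⟩ else true


theorem upper_process_binomial_threshold {Ω : Type*} [MeasurableSpace Ω] (μ : Measure Ω)
    [IsProbabilityMeasure μ]
    (B : ℕ → Ω → Bool) (hBmeas : ∀ n, Measurable (B n))
    (hBindep : iIndepFun B μ)
    (hBhalf : ∀ n, μ {ω | B n ω = true} = 1/2)
    (Zu : ℕ → Ω → ℝ) (z0 : ℝ) (hz0 : z0 ∈ Set.Ioo (0:ℝ) 1)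
    (hZ0 : ∀ ω, Zu 0 ω = z0)
    (hrec : ∀ n ω,
      (B (n+1) ω = true → Zu (n+1) ω = (Zu n ω)^2) ∧
      (B (n+1) ω = false → Zu (n+1) ω = 2 * Zu n ω)) :
    ∀ x : ℝ, x ∈ Set.Ioo (0:ℝ) 1 → ∀ n : ℕ, ∀ E : ℕ,
      (∑ i ∈ Finset.Icc E n, (n.choose i : ℝ)) ≤ 2^n * x →
      2^n * x ≤ (∑ i ∈ Finset.Icc (E - 1) n, (n.choose i : ℝ)) →
      (μ {ω | Zu n ω ≤ (2:ℝ) ^ (-((2:ℝ) ^ (E : ℕ)))}).toReal ≥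
        x - 2 * Real.sqrt 2 * Real.sqrt z0 - (n.choose (E - 1) : ℝ) / 2^n := by
  intro x hx n E h1 h2
  classical
  set L0 : ℝ := -Real.logb 2 z0 with hL0
  set vec : Ω → (Fin n → Bool) := fun ω i => B (i.1+1) ω with hvec
  set Good : Finset (Fin n → Bool) :=
    Finset.univ.filter (fun v => E ≤ upbtCntV n v ∧ upbtTV n v ≤ L0 - 1) with hGoodDef
  -- each bit is half
  have hhalf' : ∀ (k : ℕ) (c : Bool), μ (B k ⁻¹' {c}) = 1/2 := by
    intro k c
    have htrue : B k ⁻¹' {true} = {ω | B k ω = true} := by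
      ext ω; simp
    have hmt : MeasurableSet {ω | B k ω = true} := by
      rw [← htrue]; exact hBmeas k (measurableSet_singleton _)
    cases c
    · have : B k ⁻¹' {false} = {ω | B k ω = true}ᶜ := by
        ext ω; simp
      rw [this, prob_compl_eq_one_sub hmt, hBhalf k, one_div, ENNReal.one_sub_inv_two]
    · rw [htrue]; exact hBhalf k
  set pad : (Fin n → Bool) → ℕ → Bool := upbtPad n with hpad
  -- atom measure
  have hatom : ∀ v : Fin n → Bool, μ {ω | vec ω = v} = (1/2 : ℝ≥0∞)^n := by
    intro v
    have hset : {ω | vec ω = v} = ⋂ k ∈ Finset.Icc 1 n, B k ⁻¹' {pad v k} := by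
      ext ω
      simp only [Set.mem_setOf_eq, Set.mem_iInter, Set.mem_preimage, Set.mem_singleton_iff,
        Finset.mem_Icc, funext_iff]
      constructor
      · rintro h k ⟨hk1, hk2⟩
        have hpk : pad v k = v ⟨k-1, by omega⟩ := dif_pos ⟨hk1, hk2⟩
        rw [hpk]
        have h3 : B (k-1+1) ω = v ⟨k-1, by omega⟩ := h ⟨k-1, by omega⟩
        rw [show k-1+1 = k by omega] at h3
        exact h3
      · intro h i
        have hk := h (i.1+1) ⟨by omega, by omega⟩
        have hpk : pad v (i.1+1) = v ⟨i.1+1-1, by omega⟩ := dif_pos ⟨by omega, by omega⟩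
        rw [hpk] at hk
        have he : (⟨i.1+1-1, by omega⟩ : Fin n) = i := Fin.ext (by simp)
        rw [he] at hk
        exact hk
    rw [hset]
    rw [hBindep.measure_inter_preimage_eq_mul (Finset.Icc 1 n)
      (sets := fun k => ({pad v k} : Set Bool)) (fun i _ => measurableSet_singleton _)]
    rw [Finset.prod_congr rfl (fun k _ => hhalf' k (pad v k))]
    rw [Finset.prod_const, Nat.card_Icc]
    norm_num
  -- atoms measurable
  have hatom_meas : ∀ v : Fin n → Bool, MeasurableSet {ω | vec ω = v} := by
    intro v
    have : {ω | vec ω = v} = ⋂ i : Fin n, (B (i.1+1)) ⁻¹' {v i} := by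
      ext ω; simp [funext_iff]; rfl
    rw [this]
    exact MeasurableSet.iInter (fun i => (hBmeas _) (measurableSet_singleton _))
  -- event measure
  have hA : {ω | vec ω ∈ Good} = ⋃ v ∈ Good, {ω | vec ω = v} := by
    ext ω; simp
  have hmuA : μ {ω | vec ω ∈ Good} = (Good.card : ℝ≥0∞) * (1/2:ℝ≥0∞)^n := by
    rw [hA, measure_biUnion_finset ?hd (fun v _ => hatom_meas v)]
    · rw [Finset.sum_congr rfl (fun v _ => hatom v), Finset.sum_const, nsmul_eq_mul]
    case hd =>
      intro a _ b _ hab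
      simp only [Function.onFun]
      rw [Set.disjoint_left]
      rintro ω h1 h2
      exact hab (h1.symm.trans h2)
  -- inclusion into the target event
  have hincl : {ω | vec ω ∈ Good} ⊆ {ω | Zu n ω ≤ (2:ℝ) ^ (-((2:ℝ) ^ (E : ℕ)))} := by
    intro ω hω
    simp only [hGoodDef, Finset.mem_coe, Finset.mem_filter, Finset.mem_univ, true_and,
      Set.mem_setOf_eq] at hω
    obtain ⟨hcE, hTle⟩ := hω
    have hid := upbt_identity B Zu z0 hz0.1 hZ0 hrec ω n
    have hveq : (fun i : Fin n => (fun k => B k ω) (i+1)) = vec ω := rfl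
    have hc : upbtCnt (fun k => B k ω) n = upbtCntV n (vec ω) := by
      rw [upbt_bridge_cnt, hveq]
    have hT : upbtT (fun k => B k ω) n = upbtTV n (vec ω) := by
      rw [upbt_bridge_T, hveq]
    simp only [Set.mem_setOf_eq]
    rw [hid, hc, hT]
    apply Real.rpow_le_rpow_of_exponent_le (by norm_num)
    have hpow : (2:ℝ)^(E:ℕ) ≤ (2:ℝ)^(upbtCntV n (vec ω)) :=
      pow_le_pow_right₀ (by norm_num) hcE
    have h1' : (1:ℝ) ≤ L0 - upbtTV n (vec ω) := by linarith
    have hp0 : (0:ℝ) ≤ (2:ℝ)^(upbtCntV n (vec ω)) := by positivity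
    nlinarith
  -- measure comparison
  have hmono : μ {ω | vec ω ∈ Good} ≤ μ {ω | Zu n ω ≤ (2:ℝ) ^ (-((2:ℝ) ^ (E : ℕ)))} :=
    measure_mono hincl
  have htoReal : (μ {ω | vec ω ∈ Good}).toReal
      ≤ (μ {ω | Zu n ω ≤ (2:ℝ) ^ (-((2:ℝ) ^ (E : ℕ)))}).toReal :=
    ENNReal.toReal_mono (measure_ne_top μ _) hmono
  have hAval : (μ {ω | vec ω ∈ Good}).toReal = (Good.card : ℝ) * (1/2:ℝ)^n := by
    rw [hmuA, ENNReal.toReal_mul, ENNReal.toReal_pow]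
    norm_num
  -- counting
  have hGEcard : ((univ.filter (fun v : Fin n → Bool => E ≤ upbtCntV n v)).card : ℝ)
      = ∑ k ∈ Finset.Icc E n, (n.choose k : ℝ) := by
    have hsplit : univ.filter (fun v : Fin n → Bool => E ≤ upbtCntV n v)
        = (Finset.Icc E n).biUnion
            (fun k => univ.filter (fun v : Fin n → Bool => upbtCntV n v = k)) := by
      ext v
      simp only [Finset.mem_filter, Finset.mem_univ, true_and, Finset.mem_biUnion,
        Finset.mem_Icc]
      constructor
      · intro h
        exact ⟨upbtCntV n v, ⟨h, upbtCntV_le n v⟩, rfl⟩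
      · rintro ⟨k, ⟨hk1, _⟩, hk⟩
        omega
    rw [hsplit, Finset.card_biUnion]
    · push_cast
      exact Finset.sum_congr rfl (fun k _ => by rw [card_cntV_eq n k])
    · intro a _ b _ hab
      rw [Function.onFun, Finset.disjoint_left]
      intro v hv hv'
      simp only [Finset.mem_filter] at hv hv'
      exact hab (hv.2 ▸ hv'.2)
  -- sum splitting
  have hsum : (∑ i ∈ Finset.Icc (E-1) n, (n.choose i : ℝ))
      ≤ (n.choose (E-1) : ℝ) + ∑ i ∈ Finset.Icc E n, (n.choose i : ℝ) := by
    rcases Nat.eq_zero_or_pos E with hE0 | hEpos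
    · subst hE0
      have h0 : (0:ℕ) - 1 = 0 := rfl
      rw [h0]
      have : (0:ℝ) ≤ (n.choose 0 : ℝ) := by positivity
      linarith
    · obtain ⟨E', rfl⟩ : ∃ E', E = E' + 1 := ⟨E - 1, by omega⟩
      simp only [Nat.add_sub_cancel]
      rcases le_or_gt E' n with hE'n | hE'n
      · have : Finset.Icc E' n = insert E' (Finset.Icc (E'+1) n) := by
          ext k
          simp only [Finset.mem_Icc, Finset.mem_insert]
          omega
        rw [this, Finset.sum_insert (by simp)]
      · have h0 : Finset.Icc E' n = ∅ := by
          rw [Finset.Icc_eq_empty_iff]; omega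
        have h0' : Finset.Icc (E'+1) n = ∅ := by
          rw [Finset.Icc_eq_empty_iff]; omega
        rw [h0, h0']
        simp only [Finset.sum_empty, add_zero]
        positivity
  -- tail bound value
  have hmin_val : min 1 ((2:ℝ)^(1 - (L0-1)/2)) ≤ 2 * Real.sqrt 2 * Real.sqrt z0 := by
    have hval : (2:ℝ)^(1 - (L0-1)/2) = 2 * Real.sqrt 2 * Real.sqrt z0 := by
      have e1 : (1 - (L0-1)/2 : ℝ) = (1:ℝ) + (1/2 : ℝ) + (Real.logb 2 z0) * (1/2) := by
        rw [hL0]; ring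
      rw [e1, Real.rpow_add (by norm_num), Real.rpow_add (by norm_num), Real.rpow_one]
      have e2 : (2:ℝ)^((1:ℝ)/2) = Real.sqrt 2 := by
        rw [Real.sqrt_eq_rpow]
      have e3 : (2:ℝ)^(Real.logb 2 z0 * (1/2:ℝ)) = Real.sqrt z0 := by
        rw [Real.rpow_mul (by norm_num), Real.rpow_logb (by norm_num) (by norm_num) hz0.1,
          Real.sqrt_eq_rpow]
      rw [e2, e3]
    rw [← hval]
    exact min_le_right _ _
  have hTailcard : ((univ.filter (fun v : Fin n → Bool => L0 - 1 < upbtTV n v)).card : ℝ)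
      ≤ 2^n * (2 * Real.sqrt 2 * Real.sqrt z0) := by
    refine le_trans (card_tailV n (L0-1)) ?_
    have : (0:ℝ) ≤ 2^n := by positivity
    exact mul_le_mul_of_nonneg_left hmin_val this
  -- GE ⊆ Good ∪ Tail
  have hGEsub : univ.filter (fun v : Fin n → Bool => E ≤ upbtCntV n v)
      ⊆ Good ∪ univ.filter (fun v : Fin n → Bool => L0 - 1 < upbtTV n v) := by
    intro v hv
    simp only [Finset.mem_filter, Finset.mem_univ, true_and] at hv
    rcases le_or_gt (upbtTV n v) (L0 - 1) with h | h
    · exact Finset.mem_union_left _ (by simp [hGoodDef, hv, h])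
    · exact Finset.mem_union_right _ (by simp [h])
  have hGEcard_le : ((univ.filter (fun v : Fin n → Bool => E ≤ upbtCntV n v)).card : ℝ)
      ≤ (Good.card : ℝ)
        + ((univ.filter (fun v : Fin n → Bool => L0 - 1 < upbtTV n v)).card : ℝ) := by
    have := Finset.card_le_card hGEsub
    have h2' := Finset.card_union_le Good
      (univ.filter (fun v : Fin n → Bool => L0 - 1 < upbtTV n v))
    push_cast
    exact_mod_cast le_trans (Nat.cast_le.mpr this) (by exact_mod_cast h2')
  -- final arithmetic
  have hGoodLB : (x * 2^n - (n.choose (E-1) : ℝ)) - 2^n * (2 * Real.sqrt 2 * Real.sqrt z0)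
      ≤ (Good.card : ℝ) := by
    have hGE_LB : x * 2^n - (n.choose (E-1) : ℝ)
        ≤ ((univ.filter (fun v : Fin n → Bool => E ≤ upbtCntV n v)).card : ℝ) := by
      rw [hGEcard]
      have := h2
      linarith [hsum]
    linarith [hGEcard_le, hTailcard, hGE_LB]
  have h2npos : (0:ℝ) < 2^n := by positivity
  have hstep : x - 2 * Real.sqrt 2 * Real.sqrt z0 - (n.choose (E-1) : ℝ) / 2^n
      ≤ (Good.card : ℝ) * (1/2:ℝ)^n := by
    have hhp : ((1:ℝ)/2)^n = 1/2^n := by rw [div_pow, one_pow]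
    rw [hhp, mul_one_div, le_div_iff₀ h2npos]
    have hch : (n.choose (E-1) : ℝ)/2^n * 2^n = (n.choose (E-1):ℝ) :=
      div_mul_cancel₀ _ (ne_of_gt h2npos)
    nlinarith [hGoodLB, hch]
  rw [ge_iff_le]
  refine le_trans hstep ?_
  rw [← hAval]
  exact htoReal

end UPBT
end
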